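/- arXiv:1801.04109 — 3 statements merged into one kernel-verified Lean document; each statement's English description precedes it below -/
import Mathlib

section
/- Let N be a continuous martingale with N₀ = 0 and let p ∈ (0,1). Then there exists a constant a_p > 0, depending only on p, such that for all β > 0 and h > 0, if ℙ(⟨N⟩_h ≥ β) ≥ p, then E[|N_h|] ≥ a_p √β. -/
open MeasureTheory NNReal Filter Topology

section A
lemma isStoppingTime_coe_iff {Ω : Type} {mΩ : MeasurableSpace Ω} {F : Filtration ℝ≥0 mΩ}
    {τ : Ω → ℝ≥0} : IsStoppingTime F (fun ω => (τ ω : WithTop ℝ≥0)) ↔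
      ∀ t, MeasurableSet[F t] {ω | τ ω ≤ t} := by
  simp only [IsStoppingTime, WithTop.coe_le_coe]

variable {Ω : Type} {mΩ : MeasurableSpace Ω} (F : Filtration ℝ≥0 mΩ)
  (g : ℝ≥0 → Ω → ℝ) (h : ℝ≥0)

/-- first time in `[0,h]` where `g ≥ 0`, or `h` if none -/
noncomputable def hitSig (ω : Ω) : ℝ≥0 :=
  sInf ({s | s ≤ h ∧ 0 ≤ g s ω} ∪ {h})

variable {g h}

lemma hitSig_mem (hc : ∀ ω, Continuous fun t => g t ω) (ω : Ω) :
    hitSig g h ω ∈ ({s | s ≤ h ∧ 0 ≤ g s ω} ∪ {h} : Set ℝ≥0) := by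
  have hclosed : IsClosed ({s | s ≤ h ∧ 0 ≤ g s ω} ∪ {h} : Set ℝ≥0) := by
    refine IsClosed.union ?_ isClosed_singleton
    have : ({s | s ≤ h ∧ 0 ≤ g s ω} : Set ℝ≥0) =
        Set.Iic h ∩ (fun t => g t ω) ⁻¹' Set.Ici 0 := rfl
    rw [this]
    exact isClosed_Iic.inter (isClosed_Ici.preimage (hc ω))
  exact hclosed.csInf_mem ⟨h, Or.inr rfl⟩ (OrderBot.bddBelow _)

lemma hitSig_le (ω : Ω) : hitSig g h ω ≤ h :=
  csInf_le (OrderBot.bddBelow _) (Or.inr rfl)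

lemma lt_hitSig (ω : Ω) {s : ℝ≥0} (hs : s < hitSig g h ω) : g s ω < 0 := by
  by_contra hge
  push_neg at hge
  have hsh : s ≤ h := le_of_lt (lt_of_lt_of_le hs (hitSig_le ω))
  have : hitSig g h ω ≤ s := csInf_le (OrderBot.bddBelow _) (Or.inl ⟨hsh, hge⟩)
  exact absurd hs (not_lt.2 this)

lemma hitSig_nonpos (hc : ∀ ω, Continuous fun t => g t ω)
    (h0 : ∀ ω, g 0 ω < 0) (ω : Ω) : g (hitSig g h ω) ω ≤ 0 := by
  rcases eq_or_lt_of_le (zero_le : 0 ≤ hitSig g h ω) with h0' | hpos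
  · rw [← h0']; exact (h0 ω).le
  · have hne : (𝓝[<] (hitSig g h ω)).NeBot := nhdsWithin_Iio_self_neBot' ⟨0, hpos⟩
    have htend : Tendsto (fun s => g s ω) (𝓝[<] (hitSig g h ω)) (𝓝 (g (hitSig g h ω) ω)) :=
      ((hc ω).tendsto _).mono_left nhdsWithin_le_nhds
    refine le_of_tendsto htend ?_
    exact eventually_nhdsWithin_of_forall fun s hs => (lt_hitSig ω hs).le

lemma hitSig_cases (hc : ∀ ω, Continuous fun t => g t ω) (ω : Ω) :
    hitSig g h ω = h ∨ 0 ≤ g (hitSig g h ω) ω := by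
  rcases hitSig_mem hc ω with hmem | hmem
  · exact Or.inr hmem.2
  · exact Or.inl hmem


-- stopping time property
lemma hitSig_isStoppingTime
    (hc : ∀ ω : Ω, Continuous fun t => g t ω)
    (hga : ∀ s (c : ℝ), MeasurableSet[F s] {ω | c < g s ω}) :
    IsStoppingTime F (fun ω => (hitSig g h ω : WithTop ℝ≥0)) := by
  rw [isStoppingTime_coe_iff]
  intro t
  by_cases hth : h ≤ t
  · have : {ω : Ω | hitSig g h ω ≤ t} = Set.univ := by
      ext ω; simp [Set.mem_setOf_eq, le_trans (hitSig_le ω) hth]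
    rw [this]; exact MeasurableSet.univ
  · push_neg at hth
    set D : Set ℝ≥0 := insert t {s | s ≤ t ∧ ∃ r : ℚ, Real.toNNReal r = s} with hD
    have hDt : ∀ s ∈ D, s ≤ t := by
      rintro s (rfl | hs)
      · exact le_rfl
      · exact hs.1
    have hDc : D.Countable := by
      have : {s : ℝ≥0 | s ≤ t ∧ ∃ r : ℚ, Real.toNNReal r = s}.Countable := by
        refine (Set.countable_range fun r : ℚ => Real.toNNReal (r : ℝ)).mono ?_
        rintro s ⟨-, r, rfl⟩
        exact ⟨r, rfl⟩
      exact this.insert t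
    have key : ∀ ω, hitSig g h ω ≤ t ↔
        ∀ n : ℕ, ∃ s ∈ D, -(1 / (n + 1) : ℝ) < g s ω := by
      intro ω
      constructor
      · intro hle n
        -- hitSig ∈ the defining set and ≠ h, so 0 ≤ g (hitSig) ω
        have hmem : hitSig g h ω ∈ ({s | s ≤ h ∧ 0 ≤ g s ω} ∪ {h} : Set ℝ≥0) := by
          have hclosed : IsClosed ({s | s ≤ h ∧ 0 ≤ g s ω} ∪ {h} : Set ℝ≥0) := by
            refine IsClosed.union ?_ isClosed_singleton
            exact isClosed_Iic.inter (isClosed_Ici.preimage (hc ω))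
          exact hclosed.csInf_mem ⟨h, Or.inr rfl⟩ (OrderBot.bddBelow _)
      -- hitSig ≤ t < h
        have hne : hitSig g h ω ≠ h := fun he => absurd (he ▸ hle) (not_le.2 hth)
        have hpos : 0 ≤ g (hitSig g h ω) ω := by
          rcases hmem with hm | hm
          · exact hm.2
          · exact absurd hm hne
        set s₀ := hitSig g h ω with hs₀
        -- find an element of D close to s₀ where g > -(1/(n+1))
        have hn1 : (0 : ℝ) < 1 / (n + 1) := by positivity
        by_cases hst : s₀ = t
        · exact ⟨t, Set.mem_insert _ _, by rw [← hst]; linarith⟩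
        · have hstlt : s₀ < t := lt_of_le_of_ne hle hst
          have hU : IsOpen ((fun u => g u ω) ⁻¹' Set.Ioi (-(1 / (n + 1) : ℝ))) :=
            isOpen_Ioi.preimage (hc ω)
          have hs₀U : s₀ ∈ (fun u => g u ω) ⁻¹' Set.Ioi (-(1 / (n + 1) : ℝ)) := by
            simp only [Set.mem_preimage, Set.mem_Ioi]; linarith
          obtain ⟨ε, hε, hball⟩ := Metric.isOpen_iff.1 hU s₀ hs₀U
          have hlt : (s₀ : ℝ) < min ((s₀ : ℝ) + ε) (t : ℝ) := by
            refine lt_min (by linarith) ?_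
            exact_mod_cast hstlt
          obtain ⟨q, hq1, hq2⟩ := exists_rat_btwn hlt
          have hq0 : (0 : ℝ) ≤ q := le_trans s₀.coe_nonneg hq1.le
          set s' := Real.toNNReal q with hs'
          have hs'c : (s' : ℝ) = q := Real.coe_toNNReal q hq0
          have hs't : s' ≤ t := by
            rw [← NNReal.coe_le_coe, hs'c]
            exact le_of_lt (lt_of_lt_of_le hq2 (min_le_right _ _))
          have hs'ball : s' ∈ Metric.ball s₀ ε := by
            rw [Metric.mem_ball, NNReal.dist_eq, hs'c]
            rw [abs_sub_lt_iff]
            constructor <;> [skip; linarith]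
            have := lt_of_lt_of_le hq2 (min_le_left _ _)
            linarith
          exact ⟨s', Or.inr ⟨hs't, q, rfl⟩, hball hs'ball⟩
      · intro hall
        -- extract a max of g on Icc 0 t
        obtain ⟨x₀, hx₀, hmax⟩ := (isCompact_Icc (a := (0:ℝ≥0)) (b := t)).exists_isMaxOn
          ⟨0, by simp⟩ ((hc ω).continuousOn)
        have hx₀g : 0 ≤ g x₀ ω := by
          by_contra hneg
          push_neg at hneg
          obtain ⟨n, hn⟩ := exists_nat_one_div_lt (show (0:ℝ) < -(g x₀ ω) by linarith)
          obtain ⟨s, hsD, hsg⟩ := hall n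
          have : g s ω ≤ g x₀ ω := hmax ⟨zero_le, hDt s hsD⟩
          linarith
        exact le_trans (csInf_le (OrderBot.bddBelow _)
          (Or.inl ⟨le_trans hx₀.2 hth.le, hx₀g⟩)) hx₀.2
    have hset : {ω : Ω | hitSig g h ω ≤ t} =
        ⋂ n : ℕ, ⋃ s ∈ D, {ω | -(1 / (n + 1) : ℝ) < g s ω} := by
      ext ω
      simp only [Set.mem_setOf_eq, Set.mem_iInter, Set.mem_iUnion, exists_prop, key]
    rw [hset]
    refine MeasurableSet.iInter fun n => MeasurableSet.biUnion hDc fun s hs => ?_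
    exact F.mono (hDt s hs) _ (hga s _)

end A

section C
variable {Ω : Type} {mΩ : MeasurableSpace Ω} {F : Filtration ℝ≥0 mΩ}

/-- dyadic upper approximation of a stopping time bounded by `h`. -/
noncomputable def dyApprox (h : ℝ≥0) (τ : Ω → ℝ≥0) (n : ℕ) (ω : Ω) : ℝ≥0 :=
  min ((⌈(τ ω : ℝ) * 2 ^ n⌉₊ : ℝ≥0) / 2 ^ n) h

lemma dyApprox_le_h {h : ℝ≥0} {τ : Ω → ℝ≥0} (n : ℕ) (ω : Ω) : dyApprox h τ n ω ≤ h :=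
  min_le_right _ _

lemma le_dyApprox {h : ℝ≥0} {τ : Ω → ℝ≥0} (hτh : ∀ ω, τ ω ≤ h) (n : ℕ) (ω : Ω) :
    τ ω ≤ dyApprox h τ n ω := by
  refine le_min ?_ (hτh ω)
  rw [← NNReal.coe_le_coe]
  push_cast
  rw [le_div_iff₀ (by positivity)]
  exact Nat.le_ceil _

lemma dyApprox_le {h : ℝ≥0} {τ : Ω → ℝ≥0} (n : ℕ) (ω : Ω) :
    (dyApprox h τ n ω : ℝ) ≤ (τ ω : ℝ) + (1 / 2) ^ n := by
  have h1 : dyApprox h τ n ω ≤ (⌈(τ ω : ℝ) * 2 ^ n⌉₊ : ℝ≥0) / 2 ^ n := min_le_left _ _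
  refine le_trans (NNReal.coe_le_coe.2 h1) ?_
  push_cast
  rw [div_le_iff₀ (by positivity)]
  have := Nat.ceil_lt_add_one (by positivity : (0:ℝ) ≤ (τ ω : ℝ) * 2 ^ n)
  have h2 : ((1:ℝ) / 2) ^ n * 2 ^ n = 1 := by
    rw [← mul_pow]; norm_num
  nlinarith [this, pow_pos (show (0:ℝ) < 2 by norm_num) n]

lemma dyApprox_tendsto {h : ℝ≥0} {τ : Ω → ℝ≥0} (hτh : ∀ ω, τ ω ≤ h) (ω : Ω) :
    Tendsto (fun n => dyApprox h τ n ω) atTop (𝓝 (τ ω)) := by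
  rw [← NNReal.tendsto_coe]
  refine tendsto_of_tendsto_of_tendsto_of_le_of_le (g := fun _ => (τ ω : ℝ))
    (h := fun n => (τ ω : ℝ) + (1 / 2) ^ n) tendsto_const_nhds ?_
    (fun n => by exact_mod_cast le_dyApprox hτh n ω) (fun n => dyApprox_le n ω)
  have : Tendsto (fun n : ℕ => ((1:ℝ) / 2) ^ n) atTop (𝓝 0) := by
    refine tendsto_pow_atTop_nhds_zero_of_lt_one (by norm_num) (by norm_num)
  simpa using tendsto_const_nhds.add this

lemma dyApprox_countable_range {h : ℝ≥0} {τ : Ω → ℝ≥0} (n : ℕ) :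
    (Set.range (dyApprox h τ n)).Countable := by
  refine (Set.countable_range fun m : ℕ => min ((m : ℝ≥0) / 2 ^ n) h).mono ?_
  rintro x ⟨ω, rfl⟩
  exact ⟨⌈(τ ω : ℝ) * 2 ^ n⌉₊, rfl⟩

lemma dyApprox_isStoppingTime {h : ℝ≥0} {τ : Ω → ℝ≥0} (hτ : IsStoppingTime F (fun ω => (τ ω : WithTop ℝ≥0))) (n : ℕ) :
    IsStoppingTime F (fun ω => (dyApprox h τ n ω : WithTop ℝ≥0)) := by
  rw [isStoppingTime_coe_iff] at hτ
  have hmin : IsStoppingTime F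
      (fun ω => (((⌈(τ ω : ℝ) * 2 ^ n⌉₊ : ℝ≥0) / 2 ^ n : ℝ≥0) : WithTop ℝ≥0)) := ?_
  · convert hmin.min_const h using 1
    funext ω
    simp only [dyApprox, WithTop.coe_min]
  rw [isStoppingTime_coe_iff]
  intro t
  have het : (⌊(t : ℝ) * 2 ^ n⌋₊ : ℝ≥0) / 2 ^ n ≤ t := by
    rw [← NNReal.coe_le_coe]
    push_cast
    rw [div_le_iff₀ (by positivity)]
    exact Nat.floor_le (by positivity)
  have hiff : ∀ ω, (⌈(τ ω : ℝ) * 2 ^ n⌉₊ : ℝ≥0) / 2 ^ n ≤ t ↔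
      τ ω ≤ (⌊(t : ℝ) * 2 ^ n⌋₊ : ℝ≥0) / 2 ^ n := by
    intro ω
    rw [← NNReal.coe_le_coe, ← NNReal.coe_le_coe]
    push_cast
    rw [div_le_iff₀ (by positivity), le_div_iff₀ (by positivity)]
    constructor
    · intro h1
      have h2 : (⌈(τ ω : ℝ) * 2 ^ n⌉₊ : ℕ) ≤ ⌊(t : ℝ) * 2 ^ n⌋₊ :=
        Nat.le_floor (by exact_mod_cast h1)
      calc (τ ω : ℝ) * 2 ^ n ≤ (⌈(τ ω : ℝ) * 2 ^ n⌉₊ : ℝ) := Nat.le_ceil _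
        _ ≤ _ := by exact_mod_cast h2
    · intro h1
      have h2 : (⌈(τ ω : ℝ) * 2 ^ n⌉₊ : ℕ) ≤ ⌊(t : ℝ) * 2 ^ n⌋₊ := Nat.ceil_le.2 h1
      calc ((⌈(τ ω : ℝ) * 2 ^ n⌉₊ : ℕ) : ℝ) ≤ ((⌊(t : ℝ) * 2 ^ n⌋₊ : ℕ) : ℝ) := by
            exact_mod_cast h2
        _ ≤ (t : ℝ) * 2 ^ n := Nat.floor_le (by positivity)
  have hset : {ω : Ω | (⌈(τ ω : ℝ) * 2 ^ n⌉₊ : ℝ≥0) / 2 ^ n ≤ t} =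
      {ω | τ ω ≤ (⌊(t : ℝ) * 2 ^ n⌋₊ : ℝ≥0) / 2 ^ n} := Set.ext hiff
  show MeasurableSet[F t] {ω : Ω | (⌈(τ ω : ℝ) * 2 ^ n⌉₊ : ℝ≥0) / 2 ^ n ≤ t}
  rw [hset]
  exact F.mono het _ (hτ _)

end C

section D
variable {Ω : Type} {mΩ : MeasurableSpace Ω}

/-- limit of optional sampling along countable-range stopping times. -/
lemma osLimit (μ : Measure Ω) [IsProbabilityMeasure μ] (F : Filtration ℝ≥0 mΩ)
    {f : ℝ≥0 → Ω → ℝ} (hf : Martingale f F μ) (h : ℝ≥0)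
    {V : Ω → ℝ} (hV : MemLp V 1 μ)
    {τn : ℕ → Ω → ℝ≥0} (hτn : ∀ n, IsStoppingTime F (fun ω => (τn n ω : WithTop ℝ≥0)))
    (hτnle : ∀ n ω, τn n ω ≤ h) (hcr : ∀ n, (Set.range (τn n)).Countable)
    (hconv : ∀ ω, Tendsto (fun n => stoppedValue f (fun ω => (τn n ω : WithTop ℝ≥0)) ω) atTop (𝓝 (V ω))) :
    (∫ ω, V ω ∂μ = ∫ ω, f h ω ∂μ) ∧ (∫ ω, |V ω| ∂μ ≤ ∫ ω, |f h ω| ∂μ) := by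
  have hle : ∀ n, (hτn n).measurableSpace ≤ mΩ :=
    fun n => (hτn n).measurableSpace_le_of_le fun ω => WithTop.coe_le_coe.2 (hτnle n ω)
  have hfh_int : Integrable (f h) μ := hf.integrable h
  set c : ℕ → Ω → ℝ := fun n => μ[f h | (hτn n).measurableSpace] with hc
  have hce : ∀ n, stoppedValue f (fun ω => (τn n ω : WithTop ℝ≥0)) =ᵐ[μ] c n := fun n =>
    hf.stoppedValue_ae_eq_condExp_of_le_const_of_countable_range (hτn n)
      (fun ω => WithTop.coe_le_coe.2 (hτnle n ω))
      (((hcr n).image _).mono (by rintro _ ⟨ω, rfl⟩; exact ⟨τn n ω, ⟨ω, rfl⟩, rfl⟩))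
  have hui : UniformIntegrable c 1 μ := hfh_int.uniformIntegrable_condExp hle
  have hmeas : ∀ n, AEStronglyMeasurable (c n) μ := fun n => hui.1 n
  have hae : ∀ᵐ ω ∂μ, Tendsto (fun n => c n ω) atTop (𝓝 (V ω)) := by
    have := (ae_all_iff.2 fun n => (hce n).symm)
    filter_upwards [this] with ω hω
    have : (fun n => c n ω) = fun n => stoppedValue f (fun ω => (τn n ω : WithTop ℝ≥0)) ω := by
      ext n; exact (hω n)
    rw [this]; exact hconv ω
  have htim : TendstoInMeasure μ c atTop V := tendstoInMeasure_of_tendsto_ae hmeas hae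
  have hL1 : Tendsto (fun n => eLpNorm (c n - V) 1 μ) atTop (𝓝 0) :=
    tendsto_Lp_finite_of_tendstoInMeasure le_rfl ENNReal.one_ne_top hmeas hV hui.2.1 htim
  have hVint : Integrable V μ := memLp_one_iff_integrable.1 hV
  have hcint : ∀ n, Integrable (c n) μ := fun n => integrable_condExp
  -- E n := real L¹ distance
  have hEtend : Tendsto (fun n => ∫ ω, |c n ω - V ω| ∂μ) atTop (𝓝 0) := by
    have heq : ∀ n, ∫ ω, |c n ω - V ω| ∂μ = (eLpNorm (c n - V) 1 μ).toReal := by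
      intro n
      rw [eLpNorm_one_eq_lintegral_enorm, ← integral_norm_eq_lintegral_enorm
          (((hcint n).sub hVint).aestronglyMeasurable)]
      simp [Real.norm_eq_abs]
    simp_rw [heq]
    have h0 := (ENNReal.tendsto_toReal ENNReal.zero_ne_top).comp hL1
    rw [ENNReal.toReal_zero] at h0
    exact h0
  have hcint_eq : ∀ n, ∫ ω, c n ω ∂μ = ∫ ω, f h ω ∂μ := fun n => integral_condExp (hle n)
  constructor
  · -- |∫ f h - ∫ V| ≤ E n for all n
    have hbd : ∀ n, |∫ ω, f h ω ∂μ - ∫ ω, V ω ∂μ| ≤ ∫ ω, |c n ω - V ω| ∂μ := by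
      intro n
      rw [← hcint_eq n, ← integral_sub (hcint n) hVint]
      have := norm_integral_le_integral_norm (μ := μ) (f := fun ω => c n ω - V ω)
      simpa [Real.norm_eq_abs] using this
    have : |∫ ω, f h ω ∂μ - ∫ ω, V ω ∂μ| ≤ 0 := ge_of_tendsto' hEtend hbd
    have := le_antisymm this (abs_nonneg _)
    rw [abs_eq_zero, sub_eq_zero] at this
    exact this.symm
  · have hbd : ∀ n, ∫ ω, |V ω| ∂μ - ∫ ω, |f h ω| ∂μ ≤ ∫ ω, |c n ω - V ω| ∂μ := by
      intro n
      have h1 : ∫ ω, |c n ω| ∂μ ≤ ∫ ω, |f h ω| ∂μ := integral_abs_condExp_le _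
      have h2 : ∫ ω, |V ω| ∂μ ≤ ∫ ω, (|c n ω - V ω| + |c n ω|) ∂μ := by
        refine integral_mono hVint.abs (((hcint n).sub hVint).abs.add (hcint n).abs) fun ω => ?_
        calc |V ω| = |(-(c n ω - V ω)) + c n ω| := by ring_nf
          _ ≤ |(-(c n ω - V ω))| + |c n ω| := abs_add_le _ _
          _ = |c n ω - V ω| + |c n ω| := by rw [abs_neg]
      rw [integral_add (f := fun ω => |c n ω - V ω|) (g := fun ω => |c n ω|)
        (((hcint n).sub hVint).abs) ((hcint n).abs)] at h2
      linarith
    have : ∫ ω, |V ω| ∂μ - ∫ ω, |f h ω| ∂μ ≤ 0 := ge_of_tendsto' hEtend hbd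
    linarith

end D

/-- Lemma 3.5 (Lemma `lem:MG`): lower bound on `E|N_h|` for a continuous martingale whose
quadratic variation is at least `β` with probability at least `p`.  The quadratic variation
is axiomatised as a continuous, adapted, nondecreasing process `QV` starting at `0` such
that `N² - QV` is a martingale. -/
theorem stmt_10 (p : ℝ) (hp : p ∈ Set.Ioo (0 : ℝ) 1) :
    ∃ a_p : ℝ, 0 < a_p ∧
      ∀ {Ω : Type} {mΩ : MeasurableSpace Ω} (μ : Measure Ω) [IsProbabilityMeasure μ]
        (F : Filtration ℝ≥0 mΩ) (N QV : ℝ≥0 → Ω → ℝ),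
        Martingale N F μ →
        (∀ ω, Continuous fun t => N t ω) →
        (∀ ω, N 0 ω = 0) →
        Adapted F QV →
        (∀ ω, Continuous fun t => QV t ω) →
        (∀ ω, Monotone fun t => QV t ω) →
        (∀ ω, QV 0 ω = 0) →
        Martingale (fun t ω => (N t ω) ^ 2 - QV t ω) F μ →
        ∀ β : ℝ, 0 < β → ∀ h : ℝ≥0,
          ENNReal.ofReal p ≤ μ {ω | β ≤ QV h ω} →
          a_p * Real.sqrt β ≤ ∫ ω, |N h ω| ∂μ := by
  obtain ⟨hp0, hp1⟩ := hp
  set q : ℝ := p / 2 with hqdef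
  have hq0 : 0 < q := by positivity
  refine ⟨q * Real.sqrt q, by positivity, ?_⟩
  intro Ω mΩ μ _inst F N QV hN hNcont hN0 hQVa hQVc hQVm hQV0 hY β hβ h hpA
  set L : ℝ := Real.sqrt (β / q) with hLdef
  have hL0 : 0 < L := Real.sqrt_pos.2 (by positivity)
  have hLsq : L ^ 2 = β / q := Real.sq_sqrt (by positivity)
  set Y : ℝ≥0 → Ω → ℝ := fun t ω => (N t ω) ^ 2 - QV t ω with hYdef
  set g : ℝ≥0 → Ω → ℝ := fun t ω => max (QV t ω - β) (|N t ω| - L) with hgdef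
  have hgc : ∀ ω, Continuous fun t => g t ω := fun ω =>
    ((hQVc ω).sub continuous_const).max ((hNcont ω).abs.sub continuous_const)
  have hg0 : ∀ ω, g 0 ω < 0 := by
    intro ω
    simp only [hgdef, hQV0 ω, hN0 ω, abs_zero, zero_sub, max_lt_iff]
    constructor <;> [linarith; linarith]
  have hgm : ∀ s (c : ℝ), MeasurableSet[F s] {ω | c < g s ω} := by
    intro s c
    have hset : {ω | c < g s ω} =
        (QV s) ⁻¹' Set.Ioi (c + β) ∪ (N s) ⁻¹' {x : ℝ | c + L < |x|} := by
      ext ω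
      simp only [hgdef, Set.mem_setOf_eq, lt_max_iff, Set.mem_union, Set.mem_preimage,
        Set.mem_Ioi]
      constructor
      · rintro (h1 | h1)
        · left; linarith
        · right; exact by linarith
      · rintro (h1 | h1)
        · left; linarith
        · right; linarith
    rw [hset]
    refine MeasurableSet.union ((hQVa s) ?_) ((hN.stronglyAdapted s).measurable ?_)
    · exact measurableSet_Ioi
    · have : {x : ℝ | c + L < |x|} = Set.Ioi (c + L) ∪ Set.Iio (-(c + L)) := by
        ext x
        simp only [Set.mem_setOf_eq, Set.mem_union, Set.mem_Ioi, Set.mem_Iio, lt_abs]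
        constructor
        · rintro (h1 | h1); · exact Or.inl h1
          · exact Or.inr (by linarith)
        · rintro (h1 | h1); · exact Or.inl h1
          · exact Or.inr (by linarith)
      rw [this]
      exact measurableSet_Ioi.union measurableSet_Iio
  set σ : Ω → ℝ≥0 := hitSig g h with hσdef
  have hσst : IsStoppingTime F (fun ω => (σ ω : WithTop ℝ≥0)) := hitSig_isStoppingTime F hgc hgm
  have hσh : ∀ ω, σ ω ≤ h := fun ω => hitSig_le ω
  -- pointwise bounds at σ
  have hgσ : ∀ ω, g (σ ω) ω ≤ 0 := hitSig_nonpos hgc hg0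
  have hQVσ_le : ∀ ω, QV (σ ω) ω ≤ β := by
    intro ω
    have := hgσ ω
    rw [hgdef, max_le_iff] at this
    linarith [this.1]
  have hNσ_le : ∀ ω, |N (σ ω) ω| ≤ L := by
    intro ω
    have := hgσ ω
    rw [hgdef, max_le_iff] at this
    linarith [this.2]
  have hQVσ_nonneg : ∀ ω, 0 ≤ QV (σ ω) ω := fun ω => by
    simpa [hQV0 ω] using hQVm ω (zero_le : 0 ≤ σ ω)
  -- on A: β ≤ QV_σ or L ≤ |N_σ|
  have hAkey : ∀ ω, β ≤ QV h ω → (β ≤ QV (σ ω) ω ∨ L ≤ |N (σ ω) ω|) := by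
    intro ω hA
    rcases hitSig_cases hgc ω with hcase | hcase
    · left; rw [show σ ω = h from hcase]; exact hA
    · rw [hgdef, le_max_iff] at hcase
      rcases hcase with h1 | h1
      · left; linarith
      · right; linarith
  -- dyadic approximations
  set τ : ℕ → Ω → ℝ≥0 := dyApprox h σ with hτdef
  have hτst : ∀ n, IsStoppingTime F (fun ω => (τ n ω : WithTop ℝ≥0)) := fun n => dyApprox_isStoppingTime hσst n
  have hτle : ∀ n ω, τ n ω ≤ h := fun n ω => dyApprox_le_h n ω
  have hτcr : ∀ n, (Set.range (τ n)).Countable := fun n => dyApprox_countable_range n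
  have hτtend : ∀ ω, Filter.Tendsto (fun n => τ n ω) Filter.atTop (nhds (σ ω)) :=
    fun ω => dyApprox_tendsto hσh ω
  -- stopped values
  set V₁ : Ω → ℝ := stoppedValue N (fun ω => (σ ω : WithTop ℝ≥0)) with hV₁def
  set V₂ : Ω → ℝ := stoppedValue QV (fun ω => (σ ω : WithTop ℝ≥0)) with hV₂def
  have hV₁eval : ∀ ω, V₁ ω = N (σ ω) ω := fun ω => rfl
  have hV₂eval : ∀ ω, V₂ ω = QV (σ ω) ω := fun ω => rfl
  -- progressive measurability, measurability of stopped values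
  have hNprog : IsStronglyProgressive F N := hN.stronglyAdapted.isStronglyProgressive_of_continuous hNcont
  have hQVprog : IsStronglyProgressive F QV :=
    hQVa.stronglyAdapted.isStronglyProgressive_of_continuous hQVc
  have hYprog : IsStronglyProgressive F Y :=
    hY.stronglyAdapted.isStronglyProgressive_of_continuous fun ω => ((hNcont ω).pow 2).sub (hQVc ω)
  have hσle : hσst.measurableSpace ≤ mΩ := hσst.measurableSpace_le_of_le fun ω => WithTop.coe_le_coe.2 (hσh ω)
  have hV₁meas : Measurable V₁ := (measurable_stoppedValue hNprog hσst).mono hσle le_rfl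
  have hV₂meas : Measurable V₂ := (measurable_stoppedValue hQVprog hσst).mono hσle le_rfl
  -- integrability
  have hV₁int : Integrable V₁ μ := by
    refine (integrable_const L).mono' hV₁meas.aestronglyMeasurable ?_
    exact Filter.Eventually.of_forall fun ω => by
      rw [Real.norm_eq_abs]; exact hNσ_le ω
  have hV₂int : Integrable V₂ μ := by
    refine (integrable_const β).mono' hV₂meas.aestronglyMeasurable ?_
    exact Filter.Eventually.of_forall fun ω => by
      rw [Real.norm_eq_abs, hV₂eval ω, abs_of_nonneg (hQVσ_nonneg ω)]; exact hQVσ_le ω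
  have hV₁sq_int : Integrable (fun ω => V₁ ω ^ 2) μ := by
    refine (integrable_const (L ^ 2)).mono' ((hV₁meas.pow_const 2).aestronglyMeasurable) ?_
    refine Filter.Eventually.of_forall fun ω => ?_
    have h9 : |V₁ ω| = |N (σ ω) ω| := rfl
    have h10 : |V₁ ω| ≤ L := h9 ▸ hNσ_le ω
    rw [Real.norm_eq_abs, abs_of_nonneg (sq_nonneg (V₁ ω))]
    nlinarith [abs_nonneg (V₁ ω), sq_abs (V₁ ω)]
  have hV₁L1 : MemLp V₁ 1 μ := memLp_one_iff_integrable.2 hV₁int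
  have hVY : stoppedValue Y (fun ω => (σ ω : WithTop ℝ≥0)) = fun ω => V₁ ω ^ 2 - V₂ ω := rfl
  have hVYint : Integrable (stoppedValue Y (fun ω => (σ ω : WithTop ℝ≥0))) μ := by
    rw [hVY]; exact hV₁sq_int.sub hV₂int
  have hVYL1 : MemLp (stoppedValue Y (fun ω => (σ ω : WithTop ℝ≥0))) 1 μ :=
    memLp_one_iff_integrable.2 hVYint
  -- convergence of stopped values
  have hconvN : ∀ ω, Filter.Tendsto (fun n => stoppedValue N (fun ω => (τ n ω : WithTop ℝ≥0)) ω)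
      Filter.atTop (nhds (V₁ ω)) :=
    fun ω => ((hNcont ω).tendsto (σ ω)).comp (hτtend ω)
  have hconvY : ∀ ω, Filter.Tendsto (fun n => stoppedValue Y (fun ω => (τ n ω : WithTop ℝ≥0)) ω)
      Filter.atTop (nhds (stoppedValue Y (fun ω => (σ ω : WithTop ℝ≥0)) ω)) :=
    fun ω => ((((hNcont ω).pow 2).sub (hQVc ω)).tendsto (σ ω)).comp (hτtend ω)
  obtain ⟨-, habs⟩ := osLimit μ F hN h hV₁L1 hτst hτle hτcr hconvN
  obtain ⟨hYeq, -⟩ := osLimit μ F hY h hVYL1 hτst hτle hτcr hconvY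
  -- E[Y h] = 0
  have hYh0 : ∫ ω, Y h ω ∂μ = 0 := by
    have h1 : μ[Y h | F 0] =ᵐ[μ] Y 0 := hY.condExp_ae_eq (zero_le : 0 ≤ h)
    have h2 : ∫ ω, (μ[Y h | F 0]) ω ∂μ = ∫ ω, Y h ω ∂μ := integral_condExp (F.le 0)
    have h3 : ∫ ω, (μ[Y h | F 0]) ω ∂μ = ∫ ω, Y 0 ω ∂μ := integral_congr_ae h1
    have h4 : ∫ ω, Y 0 ω ∂μ = 0 := by
      have h5 : ∀ ω, Y 0 ω = 0 := fun ω => by simp [hYdef, hN0 ω, hQV0 ω]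
      calc ∫ ω, Y 0 ω ∂μ = ∫ _ω, (0:ℝ) ∂μ :=
            integral_congr_ae (Filter.Eventually.of_forall h5)
        _ = 0 := by simp
    linarith
  have hIeq : ∫ ω, V₁ ω ^ 2 ∂μ = ∫ ω, V₂ ω ∂μ := by
    have h1 : ∫ ω, (V₁ ω ^ 2 - V₂ ω) ∂μ = 0 := by
      have := hYeq
      rw [hVY] at this
      rw [this, hYh0]
    rw [integral_sub hV₁sq_int hV₂int] at h1
    linarith
  -- sets A and B
  set A : Set Ω := {ω | β ≤ QV h ω} with hAdef
  set B : Set Ω := {ω | L ≤ |V₁ ω|} with hBdef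
  have hAmeas : MeasurableSet A :=
    measurableSet_le measurable_const ((hQVa h).mono (F.le h) le_rfl)
  have hBmeas : MeasurableSet B := measurableSet_le measurable_const hV₁meas.abs
  set I : ℝ := ∫ ω, V₂ ω ∂μ with hIdef
  have hIβ : I ≤ β := by
    calc I ≤ ∫ _ω, (β:ℝ) ∂μ :=
          integral_mono hV₂int (integrable_const β) fun ω => hQVσ_le ω
      _ = β := by simp
  have hBcheb : (μ B).toReal * (β / q) ≤ I := by
    have h1 : ∫ _ω in B, (L ^ 2 : ℝ) ∂μ ≤ ∫ ω in B, V₁ ω ^ 2 ∂μ := by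
      refine setIntegral_mono_on ((integrable_const _).integrableOn)
        hV₁sq_int.integrableOn hBmeas fun ω hω => ?_
      have hωB : L ≤ |V₁ ω| := hω
      nlinarith [abs_nonneg (V₁ ω), sq_abs (V₁ ω)]
    have h2 : ∫ ω in B, V₁ ω ^ 2 ∂μ ≤ ∫ ω, V₁ ω ^ 2 ∂μ :=
      setIntegral_le_integral hV₁sq_int (Filter.Eventually.of_forall fun ω => sq_nonneg _)
    have h3 : ∫ _ω in B, (L ^ 2 : ℝ) ∂μ = (μ B).toReal * L ^ 2 := by
      rw [setIntegral_const, smul_eq_mul, measureReal_def]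
    rw [← hLsq]
    calc (μ B).toReal * L ^ 2 = ∫ _ω in B, (L ^ 2 : ℝ) ∂μ := h3.symm
      _ ≤ ∫ ω in B, V₁ ω ^ 2 ∂μ := h1
      _ ≤ ∫ ω, V₁ ω ^ 2 ∂μ := h2
      _ = I := hIeq
  have hμB : (μ B).toReal ≤ q := by
    by_contra hcon
    push_neg at hcon
    have h1 : q * (β / q) < (μ B).toReal * (β / q) :=
      mul_lt_mul_of_pos_right hcon (by positivity)
    rw [show q * (β / q) = β by field_simp] at h1
    linarith
  have hμA : p ≤ (μ A).toReal := by
    have := ENNReal.toReal_mono (measure_ne_top μ A) hpA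
    rwa [ENNReal.toReal_ofReal hp0.le] at this
  have hdiff : q ≤ (μ (A \ B)).toReal := by
    have hsub : μ A ≤ μ (A \ B) + μ B := by
      refine le_trans (measure_mono ?_) (measure_union_le _ _)
      intro x hx
      by_cases hxB : x ∈ B
      · exact Or.inr hxB
      · exact Or.inl ⟨hx, hxB⟩
    have h2 : (μ A).toReal ≤ (μ (A \ B)).toReal + (μ B).toReal := by
      have h3 := ENNReal.toReal_mono
        (ENNReal.add_ne_top.2 ⟨measure_ne_top μ _, measure_ne_top μ _⟩) hsub
      rwa [ENNReal.toReal_add (measure_ne_top μ _) (measure_ne_top μ _)] at h3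
    have hpq : p - q = q := by rw [hqdef]; ring
    linarith
  have hlow : β * q ≤ I := by
    have h1 : ∫ _ω in (A \ B), (β:ℝ) ∂μ ≤ ∫ ω in (A \ B), V₂ ω ∂μ := by
      refine setIntegral_mono_on ((integrable_const _).integrableOn)
        hV₂int.integrableOn (hAmeas.diff hBmeas) fun ω hω => ?_
      obtain ⟨hωA, hωB⟩ := hω
      rcases hAkey ω hωA with hc | hc
      · exact hc
      · exact absurd hc hωB
    have h2 : ∫ ω in (A \ B), V₂ ω ∂μ ≤ I :=
      setIntegral_le_integral hV₂int (Filter.Eventually.of_forall hQVσ_nonneg)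
    have h3 : ∫ _ω in (A \ B), (β:ℝ) ∂μ = (μ (A \ B)).toReal * β := by
      rw [setIntegral_const, smul_eq_mul, measureReal_def]
    calc β * q ≤ β * (μ (A \ B)).toReal := mul_le_mul_of_nonneg_left hdiff hβ.le
      _ = (μ (A \ B)).toReal * β := mul_comm _ _
      _ = ∫ _ω in (A \ B), (β:ℝ) ∂μ := h3.symm
      _ ≤ I := le_trans h1 h2
  -- ∫ V₁² ≤ L ∫|V₁|
  have h7 : ∫ ω, V₁ ω ^ 2 ∂μ ≤ L * ∫ ω, |V₁ ω| ∂μ := by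
    rw [← integral_const_mul]
    refine integral_mono hV₁sq_int (hV₁int.abs.const_mul L) fun ω => ?_
    have h9 : |V₁ ω| = |N (σ ω) ω| := rfl
    have h10 : |V₁ ω| ≤ L := h9 ▸ hNσ_le ω
    nlinarith [abs_nonneg (V₁ ω), sq_abs (V₁ ω)]
  -- arithmetic conclusion
  have hβqL : β = q * L ^ 2 := by rw [hLsq]; field_simp
  have hfin : q ^ 2 * L ≤ ∫ ω, |V₁ ω| ∂μ := by
    have h9 : q ^ 2 * L * L ≤ L * ∫ ω, |V₁ ω| ∂μ := by
      have e1 : q ^ 2 * L * L = β * q := by rw [hβqL]; ring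
      linarith [hlow, h7, hIeq]
    rw [mul_comm L _] at h9
    exact le_of_mul_le_mul_right h9 hL0
  have hsb : Real.sqrt β = Real.sqrt q * L := by
    rw [hLdef, ← Real.sqrt_mul hq0.le]
    congr 1
    field_simp
  have hq2L : q * Real.sqrt q * Real.sqrt β = q ^ 2 * L := by
    rw [hsb]
    have hqq : Real.sqrt q * Real.sqrt q = q := Real.mul_self_sqrt hq0.le
    linear_combination q * L * hqq
  calc q * Real.sqrt q * Real.sqrt β = q ^ 2 * L := hq2L
    _ ≤ ∫ ω, |V₁ ω| ∂μ := hfin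
    _ ≤ ∫ ω, |N h ω| ∂μ := habs
end

section
/- Let η be a probability measure on ℝ with smooth, rapidly decreasing density f, and let t ∈ ℝ. Then the optimal transport cost between η and its translate by t for the cost function c(x,y) = √|y−x| is at most |t|·∫_ℝ |f'(x)|√|x| dx. -/
namespace Stmt12Aux

open MeasureTheory ENNReal Real Set

lemma sqrt_add_le' {a b : ℝ} (ha : 0 ≤ a) (hb : 0 ≤ b) :
    Real.sqrt (a + b) ≤ Real.sqrt a + Real.sqrt b := by
  have h : a + b ≤ (Real.sqrt a + Real.sqrt b) ^ 2 := by
    nlinarith [Real.sq_sqrt ha, Real.sq_sqrt hb, Real.sqrt_nonneg a, Real.sqrt_nonneg b]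
  calc Real.sqrt (a + b) ≤ Real.sqrt ((Real.sqrt a + Real.sqrt b) ^ 2) := Real.sqrt_le_sqrt h
  _ = Real.sqrt a + Real.sqrt b := Real.sqrt_sq (by positivity)

lemma sqrt_abs_triangle (a b c : ℝ) :
    Real.sqrt |a - c| ≤ Real.sqrt |a - b| + Real.sqrt |b - c| := by
  calc Real.sqrt |a - c| ≤ Real.sqrt (|a - b| + |b - c|) :=
        Real.sqrt_le_sqrt (abs_sub_le a b c)
  _ ≤ _ := sqrt_add_le' (abs_nonneg _) (abs_nonneg _)

noncomputable def pF (g h : ℝ → ℝ) : ℝ → ℝ := fun x => max (g x - h x) 0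

noncomputable def aF (g h : ℝ → ℝ) : ℝ → ℝ := fun x => min (g x) (h x)

lemma aF_add_pF (g h : ℝ → ℝ) (x : ℝ) : aF g h x + pF g h x = g x := by
  rcases le_total (g x) (h x) with hle | hle
  · simp [aF, pF, min_eq_left hle, max_eq_right (sub_nonpos.2 hle)]
  · simp [aF, pF, min_eq_right hle, max_eq_left (sub_nonneg.2 hle)]

lemma aF_comm (g h : ℝ → ℝ) : aF g h = aF h g := by
  funext x; simp [aF, min_comm]

lemma pF_add_pF (g h : ℝ → ℝ) (x : ℝ) : pF g h x + pF h g x = |g x - h x| := by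
  rcases le_total (g x) (h x) with hle | hle
  · rw [abs_of_nonpos (by linarith)]
    simp [pF, max_eq_right (sub_nonpos.2 hle), max_eq_left (sub_nonneg.2 hle)]
  · rw [abs_of_nonneg (by linarith)]
    simp [pF, max_eq_left (sub_nonneg.2 hle), max_eq_right (sub_nonpos.2 hle)]

lemma pF_nonneg (g h : ℝ → ℝ) (x : ℝ) : 0 ≤ pF g h x := le_max_right _ _

lemma aF_nonneg (g h : ℝ → ℝ) (hg : ∀ x, 0 ≤ g x) (hh : ∀ x, 0 ≤ h x) (x : ℝ) :
    0 ≤ aF g h x := le_min (hg x) (hh x)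

lemma pF_le (g h : ℝ → ℝ) (hg : ∀ x, 0 ≤ g x) (hh : ∀ x, 0 ≤ h x) (x : ℝ) :
    pF g h x ≤ g x := by
  have h1 := hh x; have h2 := hg x
  rcases le_total (g x - h x) 0 with h0 | h0
  · rw [pF, max_eq_right h0]; exact h2
  · rw [pF, max_eq_left h0]; nlinarith

noncomputable def mE (g h : ℝ → ℝ) : ℝ≥0∞ := ∫⁻ x, ENNReal.ofReal (pF g h x)

noncomputable def rho (g h : ℝ → ℝ) : Measure ℝ :=
  (mE g h)⁻¹ • volume.withDensity (fun x => ENNReal.ofReal (pF h g x))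

noncomputable def alphaF (g h : ℝ → ℝ) : ℝ → ℝ≥0∞ :=
  fun y => ENNReal.ofReal (aF g h y) / ENNReal.ofReal (g y)

noncomputable def betaF (g h : ℝ → ℝ) : ℝ → ℝ≥0∞ :=
  fun y => ENNReal.ofReal (pF g h y) / ENNReal.ofReal (g y)

noncomputable def stepC (g h : ℝ → ℝ) (Pm : Measure (ℝ × ℝ)) : Measure (ℝ × ℝ) :=
  Pm.withDensity (fun p => alphaF g h p.2) +
    ((Pm.withDensity (fun p => betaF g h p.2)).prod (rho g h)).map (fun p => (p.1.1, p.2))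

noncomputable def costE (Pm : Measure (ℝ × ℝ)) : ℝ≥0∞ :=
  ∫⁻ q, ENNReal.ofReal (Real.sqrt |q.2 - q.1|) ∂Pm

lemma map_snd_withDensity (Pm : Measure (ℝ × ℝ)) (h : ℝ → ℝ≥0∞) (hm : Measurable h) :
    (Pm.withDensity (fun p => h p.2)).map Prod.snd = (Pm.map Prod.snd).withDensity h := by
  ext A hA
  rw [Measure.map_apply measurable_snd hA, withDensity_apply _ hA,
    withDensity_apply _ (hA.preimage measurable_snd),
    setLIntegral_map hA hm measurable_snd]

lemma isProb_of_map_fst {Pm : Measure (ℝ × ℝ)} {η : Measure ℝ} [IsProbabilityMeasure η]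
    (h : Pm.map Prod.fst = η) : IsProbabilityMeasure Pm := by
  constructor
  have := congrArg (fun μ : Measure ℝ => μ Set.univ) h
  simpa [Measure.map_apply measurable_fst MeasurableSet.univ] using this

lemma step_main {g h : ℝ → ℝ} (hgc : Continuous g) (hhc : Continuous h)
    (hg0 : ∀ x, 0 ≤ g x) (hh0 : ∀ x, 0 ≤ h x)
    (hgi : ∫⁻ x, ENNReal.ofReal (g x) = 1) (hhi : ∫⁻ x, ENNReal.ofReal (h x) = 1)
    {Pm : Measure (ℝ × ℝ)}
    (hsnd : Pm.map Prod.snd = volume.withDensity (fun x => ENNReal.ofReal (g x)))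
    (c : ℝ) :
    (stepC g h Pm).map Prod.fst = Pm.map Prod.fst ∧
    (stepC g h Pm).map Prod.snd = volume.withDensity (fun x => ENNReal.ofReal (h x)) ∧
    costE (stepC g h Pm) ≤ costE Pm +
      ∫⁻ y, ENNReal.ofReal |g y - h y| * ENNReal.ofReal (Real.sqrt |y - c|) := by
  classical
  have mg : Measurable fun x => ENNReal.ofReal (g x) := hgc.measurable.ennreal_ofReal
  have hpc : Continuous (pF g h) := (hgc.sub hhc).max continuous_const
  have hqc : Continuous (pF h g) := (hhc.sub hgc).max continuous_const
  have hac : Continuous (aF g h) := hgc.min hhc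
  have mp : Measurable fun x => ENNReal.ofReal (pF g h x) := hpc.measurable.ennreal_ofReal
  have mq : Measurable fun x => ENNReal.ofReal (pF h g x) := hqc.measurable.ennreal_ofReal
  have ma : Measurable fun x => ENNReal.ofReal (aF g h x) := hac.measurable.ennreal_ofReal
  have mα : Measurable (alphaF g h) := ma.div mg
  have mβ : Measurable (betaF g h) := mp.div mg
  have mα2 : Measurable fun p : ℝ × ℝ => alphaF g h p.2 := mα.comp measurable_snd
  have mβ2 : Measurable fun p : ℝ × ℝ => betaF g h p.2 := mβ.comp measurable_snd
  have mcost : Measurable fun q : ℝ × ℝ => ENNReal.ofReal (Real.sqrt |q.2 - q.1|) :=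
    (Real.continuous_sqrt.comp (continuous_snd.sub continuous_fst).abs).measurable.ennreal_ofReal
  have hA : (∫⁻ x, ENNReal.ofReal (aF g h x)) + mE g h = 1 := by
    rw [mE, ← lintegral_add_left ma, ← hgi]
    apply lintegral_congr; intro x
    rw [← ENNReal.ofReal_add (aF_nonneg g h hg0 hh0 x) (pF_nonneg g h x), aF_add_pF]
  have hB : (∫⁻ x, ENNReal.ofReal (aF g h x)) + mE h g = 1 := by
    rw [mE, ← lintegral_add_left ma, ← hhi]
    apply lintegral_congr; intro x
    rw [aF_comm g h, ← ENNReal.ofReal_add (aF_nonneg h g hh0 hg0 x) (pF_nonneg h g x),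
      aF_add_pF]
  have hafin : (∫⁻ x, ENNReal.ofReal (aF g h x)) ≠ ⊤ := by
    intro hcon; rw [hcon] at hA; simp at hA
  have hmm : mE h g = mE g h := ((ENNReal.add_right_inj hafin).1 (hB.trans hA.symm))
  have hm_le : mE g h ≤ 1 := by rw [← hA]; exact le_add_self
  have hm_fin : mE g h ≠ ⊤ := fun hc => by rw [hc] at hm_le; simp at hm_le
  have hNset : MeasurableSet {x : ℝ | g x = 0} := by
    have : {x : ℝ | g x = 0} = g ⁻¹' {0} := rfl
    rw [this]; exact hgc.measurable (measurableSet_singleton 0)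
  have hμgN : (volume.withDensity (fun x => ENNReal.ofReal (g x))) {x | g x = 0} = 0 := by
    rw [withDensity_apply _ hNset]
    have h0 : ∫⁻ x in {x | g x = 0}, ENNReal.ofReal (g x) = ∫⁻ _ in {x | g x = 0}, 0 := by
      apply setLIntegral_congr_fun hNset
      exact (fun x hx => by
        simp only [Set.mem_setOf_eq] at hx; simp [hx])
    simp [h0]
  have hPinull : Pm {p : ℝ × ℝ | g p.2 = 0} = 0 := by
    have hrw : {p : ℝ × ℝ | g p.2 = 0} = Prod.snd ⁻¹' {x | g x = 0} := rfl
    rw [hrw, ← Measure.map_apply measurable_snd hNset, hsnd]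
    exact hμgN
  have haePi : ∀ᵐ p ∂Pm, g p.2 ≠ 0 := by
    have := measure_eq_zero_iff_ae_notMem.1 hPinull
    exact this
  have hαβ1 : ∀ y, g y ≠ 0 → alphaF g h y + betaF g h y = 1 := by
    intro y hy
    have hgpos : 0 < g y := lt_of_le_of_ne (hg0 y) (Ne.symm hy)
    rw [alphaF, betaF, ENNReal.div_add_div_same,
      ← ENNReal.ofReal_add (aF_nonneg g h hg0 hh0 y) (pF_nonneg g h y), aF_add_pF,
      ENNReal.div_self (ne_of_gt (ENNReal.ofReal_pos.2 hgpos)) ENNReal.ofReal_ne_top]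
  have haeαβ : ((fun p : ℝ × ℝ => alphaF g h p.2) + fun p : ℝ × ℝ => betaF g h p.2)
      =ᵐ[Pm] 1 := by
    filter_upwards [haePi] with p hp
    simpa using hαβ1 p.2 hp
  have hsum : Pm.withDensity (fun p => alphaF g h p.2)
      + Pm.withDensity (fun p => betaF g h p.2) = Pm := by
    rw [← withDensity_add_left mα2, withDensity_congr_ae haeαβ, withDensity_one]
  have hmulα : ∀ y, ENNReal.ofReal (g y) * alphaF g h y = ENNReal.ofReal (aF g h y) := by
    intro y
    by_cases hy : g y = 0
    · have h0 : aF g h y = 0 := by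
        rw [aF]; rw [hy]; exact min_eq_left (hh0 y)
      simp [hy, h0]
    · have hgpos : 0 < g y := lt_of_le_of_ne (hg0 y) (Ne.symm hy)
      rw [alphaF, mul_comm]
      exact ENNReal.div_mul_cancel (ne_of_gt (ENNReal.ofReal_pos.2 hgpos)) ENNReal.ofReal_ne_top
  have hmulβ : ∀ y, ENNReal.ofReal (g y) * betaF g h y = ENNReal.ofReal (pF g h y) := by
    intro y
    by_cases hy : g y = 0
    · have h0 : pF g h y = 0 :=
        le_antisymm (by simpa [hy] using pF_le g h hg0 hh0 y) (pF_nonneg g h y)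
      simp [hy, h0]
    · have hgpos : 0 < g y := lt_of_le_of_ne (hg0 y) (Ne.symm hy)
      rw [betaF, mul_comm]
      exact ENNReal.div_mul_cancel (ne_of_gt (ENNReal.ofReal_pos.2 hgpos)) ENNReal.ofReal_ne_top
  by_cases hm : mE g h = 0
  · -- degenerate case : g = h and the step does nothing
    have hp0 : pF g h = fun _ => (0 : ℝ) := by
      have hae : (fun x => ENNReal.ofReal (pF g h x)) =ᵐ[volume] 0 :=
        (lintegral_eq_zero_iff mp).1 hm
      have hae' : pF g h =ᵐ[volume] (fun _ => (0 : ℝ)) := by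
        filter_upwards [hae] with x hx
        exact le_antisymm (ENNReal.ofReal_eq_zero.1 hx) (pF_nonneg g h x)
      exact (Continuous.ae_eq_iff_eq volume hpc continuous_const).1 hae'
    have hq0 : pF h g = fun _ => (0 : ℝ) := by
      have hm' : mE h g = 0 := hmm.trans hm
      have hae : (fun x => ENNReal.ofReal (pF h g x)) =ᵐ[volume] 0 :=
        (lintegral_eq_zero_iff mq).1 hm'
      have hae' : pF h g =ᵐ[volume] (fun _ => (0 : ℝ)) := by
        filter_upwards [hae] with x hx
        exact le_antisymm (ENNReal.ofReal_eq_zero.1 hx) (pF_nonneg h g x)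
      exact (Continuous.ae_eq_iff_eq volume hqc continuous_const).1 hae'
    have hgh : g = h := by
      funext x
      have e1 := aF_add_pF g h x
      have e2 := aF_add_pF h g x
      have hp := congrFun hp0 x
      have hq := congrFun hq0 x
      rw [hp] at e1
      rw [hq, aF_comm h g] at e2
      linarith
    have hβ0 : (fun p : ℝ × ℝ => betaF g h p.2) = fun _ => 0 := by
      funext p
      have h0 : pF g h p.2 = 0 := congrFun hp0 p.2
      simp [betaF, h0]
    have haeα : (fun p : ℝ × ℝ => alphaF g h p.2) =ᵐ[Pm] 1 := by
      filter_upwards [haePi] with p hp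
      have hgpos : 0 < g p.2 := lt_of_le_of_ne (hg0 p.2) (Ne.symm hp)
      have h0 : aF g h p.2 = g p.2 := by
        rw [aF, ← hgh, min_self]
      simp [alphaF, h0,
        ENNReal.div_self (ne_of_gt (ENNReal.ofReal_pos.2 hgpos)) ENNReal.ofReal_ne_top]
    have hstep : stepC g h Pm = Pm := by
      rw [stepC, hβ0]
      have hz : Pm.withDensity (fun _ => (0 : ℝ≥0∞)) = 0 := by
        simpa using withDensity_zero (μ := Pm)
      rw [hz, Measure.zero_prod, Measure.map_zero, add_zero,
        withDensity_congr_ae haeα, withDensity_one]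
    refine ⟨by rw [hstep], ?_, ?_⟩
    · rw [hstep, hsnd, hgh]
    · rw [hstep]; exact le_self_add
  · -- main case
    haveI hρ : IsProbabilityMeasure (rho g h) := by
      constructor
      rw [rho, Measure.smul_apply, withDensity_apply _ MeasurableSet.univ,
        Measure.restrict_univ, smul_eq_mul]
      have : ∫⁻ x, ENNReal.ofReal (pF h g x) = mE g h := hmm
      rw [this, ENNReal.inv_mul_cancel hm hm_fin]
    set σ' := Pm.withDensity (fun p => betaF g h p.2) with hσ'
    have hσuniv : σ' Set.univ = mE g h := by
      rw [hσ', withDensity_apply _ MeasurableSet.univ, Measure.restrict_univ,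
        ← lintegral_map mβ measurable_snd, hsnd,
        lintegral_withDensity_eq_lintegral_mul volume mg mβ, mE]
      apply lintegral_congr; intro y
      exact hmulβ y
    haveI : IsFiniteMeasure σ' :=
      ⟨by rw [hσuniv]; exact lt_of_le_of_lt hm_le ENNReal.one_lt_top⟩
    have hF : Measurable (fun p : (ℝ × ℝ) × ℝ => (p.1.1, p.2)) :=
      (measurable_fst.comp measurable_fst).prodMk measurable_snd
    have hfst_jump : ((σ'.prod (rho g h)).map (fun p => (p.1.1, p.2))).map Prod.fst
        = σ'.map Prod.fst := by
      rw [Measure.map_map measurable_fst hF]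
      have hcomp : (Prod.fst ∘ fun p : (ℝ × ℝ) × ℝ => (p.1.1, p.2))
          = Prod.fst ∘ (Prod.fst : (ℝ × ℝ) × ℝ → ℝ × ℝ) := rfl
      rw [hcomp, ← Measure.map_map measurable_fst measurable_fst, Measure.map_fst_prod,
        measure_univ, one_smul]
    have hfst : (stepC g h Pm).map Prod.fst = Pm.map Prod.fst := by
      rw [stepC, Measure.map_add _ _ measurable_fst, hfst_jump,
        ← Measure.map_add _ _ measurable_fst, hsum]
    have hsnd_diag : (Pm.withDensity fun p => alphaF g h p.2).map Prod.snd
        = volume.withDensity (fun x => ENNReal.ofReal (aF g h x)) := by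
      rw [map_snd_withDensity Pm _ mα, hsnd, ← withDensity_mul volume mg mα]
      exact withDensity_congr_ae (Filter.Eventually.of_forall hmulα)
    have hsnd_jump : ((σ'.prod (rho g h)).map (fun p => (p.1.1, p.2))).map Prod.snd
        = volume.withDensity (fun x => ENNReal.ofReal (pF h g x)) := by
      rw [Measure.map_map measurable_snd hF]
      have hcomp : (Prod.snd ∘ fun p : (ℝ × ℝ) × ℝ => (p.1.1, p.2))
          = (Prod.snd : (ℝ × ℝ) × ℝ → ℝ) := rfl
      rw [hcomp, Measure.map_snd_prod, hσuniv, rho, smul_smul,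
        ENNReal.mul_inv_cancel hm hm_fin, one_smul]
    have hsndS : (stepC g h Pm).map Prod.snd
        = volume.withDensity (fun x => ENNReal.ofReal (h x)) := by
      rw [stepC, Measure.map_add _ _ measurable_snd, hsnd_diag, hsnd_jump,
        ← withDensity_add_left ma]
      apply withDensity_congr_ae
      apply Filter.Eventually.of_forall
      intro x
      show ENNReal.ofReal (aF g h x) + ENNReal.ofReal (pF h g x) = ENNReal.ofReal (h x)
      rw [← ENNReal.ofReal_add (aF_nonneg g h hg0 hh0 x) (pF_nonneg h g x), aF_comm g h,
        aF_add_pF h g x]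
    -- cost estimate
    have hcost : costE (stepC g h Pm) ≤ costE Pm +
        ∫⁻ y, ENNReal.ofReal |g y - h y| * ENNReal.ofReal (Real.sqrt |y - c|) := by
      set w : ℝ → ℝ≥0∞ := fun y => ENNReal.ofReal (Real.sqrt |y - c|) with hwdef
      have mw : Measurable w :=
        (Real.continuous_sqrt.comp (continuous_id.sub continuous_const).abs).measurable.ennreal_ofReal
      set G : ℝ × ℝ → ℝ≥0∞ :=
        fun p => ENNReal.ofReal (Real.sqrt |p.2 - p.1|) + w p.2 with hGdef
      have mG : Measurable G := mcost.add (mw.comp measurable_snd)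
      have hJ : (∫⁻ q, ENNReal.ofReal (Real.sqrt |q.2 - q.1.1|) ∂(σ'.prod (rho g h)))
          ≤ (∫⁻ p, G p ∂σ') + (mE g h) * ∫⁻ z, w z ∂(rho g h) := by
        have hpt : ∀ q : (ℝ × ℝ) × ℝ, ENNReal.ofReal (Real.sqrt |q.2 - q.1.1|)
            ≤ G q.1 + w q.2 := by
          rintro ⟨⟨x, y⟩, z⟩
          have t1 : Real.sqrt |z - x| ≤ Real.sqrt |z - y| + Real.sqrt |y - x| :=
            sqrt_abs_triangle z y x
          have t2 : Real.sqrt |z - y| ≤ Real.sqrt |z - c| + Real.sqrt |c - y| :=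
            sqrt_abs_triangle z c y
          have t3 : Real.sqrt |z - x|
              ≤ (Real.sqrt |y - x| + Real.sqrt |y - c|) + Real.sqrt |z - c| := by
            rw [abs_sub_comm c y] at t2
            linarith
          calc ENNReal.ofReal (Real.sqrt |z - x|)
              ≤ ENNReal.ofReal ((Real.sqrt |y - x| + Real.sqrt |y - c|) + Real.sqrt |z - c|) :=
                ENNReal.ofReal_le_ofReal t3
            _ = (ENNReal.ofReal (Real.sqrt |y - x|) + ENNReal.ofReal (Real.sqrt |y - c|))
                + ENNReal.ofReal (Real.sqrt |z - c|) := by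
                rw [ENNReal.ofReal_add (by positivity) (Real.sqrt_nonneg _),
                  ENNReal.ofReal_add (Real.sqrt_nonneg _) (Real.sqrt_nonneg _)]
            _ = G (x, y) + w z := rfl
        calc (∫⁻ q, ENNReal.ofReal (Real.sqrt |q.2 - q.1.1|) ∂(σ'.prod (rho g h)))
            ≤ ∫⁻ q, G q.1 + w q.2 ∂(σ'.prod (rho g h)) := lintegral_mono hpt
          _ = (∫⁻ q, G q.1 ∂(σ'.prod (rho g h))) + ∫⁻ q, w q.2 ∂(σ'.prod (rho g h)) :=
              lintegral_add_left (mG.comp measurable_fst) _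
          _ = (∫⁻ p, G p ∂σ') + (mE g h) * ∫⁻ z, w z ∂(rho g h) := by
              rw [← lintegral_map mG measurable_fst, ← lintegral_map mw measurable_snd,
                Measure.map_fst_prod, Measure.map_snd_prod, measure_univ, one_smul,
                hσuniv, lintegral_smul_measure, smul_eq_mul]
      have hGσ : (∫⁻ p, G p ∂σ')
          = (∫⁻ p, betaF g h p.2 * ENNReal.ofReal (Real.sqrt |p.2 - p.1|) ∂Pm)
            + ∫⁻ y, ENNReal.ofReal (pF g h y) * w y := by
        rw [hσ', lintegral_withDensity_eq_lintegral_mul Pm mβ2 mG]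
        have : ∀ p : ℝ × ℝ, ((fun p : ℝ × ℝ => betaF g h p.2) * G) p
            = betaF g h p.2 * ENNReal.ofReal (Real.sqrt |p.2 - p.1|)
              + betaF g h p.2 * w p.2 := by
          intro p; simp only [Pi.mul_apply, hGdef]; rw [mul_add]
        rw [lintegral_congr this, lintegral_add_left (mβ2.fun_mul mcost)]
        congr 1
        rw [← lintegral_map (mβ.fun_mul mw) measurable_snd, hsnd,
          lintegral_withDensity_eq_lintegral_mul volume mg (mβ.fun_mul mw)]
        apply lintegral_congr; intro y
        simp only [Pi.mul_apply]
        rw [← mul_assoc, hmulβ]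
      have hwρ : (mE g h) * (∫⁻ z, w z ∂(rho g h))
          = ∫⁻ z, ENNReal.ofReal (pF h g z) * w z := by
        rw [rho, lintegral_smul_measure, smul_eq_mul, ← mul_assoc,
          ENNReal.mul_inv_cancel hm hm_fin, one_mul,
          lintegral_withDensity_eq_lintegral_mul volume mq mw]
        rfl
      have hdiag : (∫⁻ p, alphaF g h p.2 * ENNReal.ofReal (Real.sqrt |p.2 - p.1|) ∂Pm)
          + (∫⁻ p, betaF g h p.2 * ENNReal.ofReal (Real.sqrt |p.2 - p.1|) ∂Pm)
          = costE Pm := by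
        rw [← lintegral_add_left (mα2.fun_mul mcost)]
        rw [costE]
        apply lintegral_congr_ae
        filter_upwards [haePi] with p hp
        rw [← add_mul, hαβ1 p.2 hp, one_mul]
      have hpq : (∫⁻ y, ENNReal.ofReal (pF g h y) * w y)
          + (∫⁻ z, ENNReal.ofReal (pF h g z) * w z)
          = ∫⁻ y, ENNReal.ofReal |g y - h y| * w y := by
        rw [← lintegral_add_left (mp.fun_mul mw)]
        apply lintegral_congr; intro y
        rw [← add_mul, ← ENNReal.ofReal_add (pF_nonneg g h y) (pF_nonneg h g y), pF_add_pF]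
      calc costE (stepC g h Pm)
          = (∫⁻ p, alphaF g h p.2 * ENNReal.ofReal (Real.sqrt |p.2 - p.1|) ∂Pm)
            + ∫⁻ q, ENNReal.ofReal (Real.sqrt |q.2 - q.1.1|) ∂(σ'.prod (rho g h)) := by
            rw [costE, stepC, lintegral_add_measure,
              lintegral_withDensity_eq_lintegral_mul Pm mα2 mcost,
              lintegral_map mcost hF]
            rfl
        _ ≤ (∫⁻ p, alphaF g h p.2 * ENNReal.ofReal (Real.sqrt |p.2 - p.1|) ∂Pm)
            + ((∫⁻ p, betaF g h p.2 * ENNReal.ofReal (Real.sqrt |p.2 - p.1|) ∂Pm)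
              + ((∫⁻ y, ENNReal.ofReal (pF g h y) * w y)
                + ∫⁻ z, ENNReal.ofReal (pF h g z) * w z)) := by
            refine add_le_add_right ?_ _
            calc (∫⁻ q, ENNReal.ofReal (Real.sqrt |q.2 - q.1.1|) ∂(σ'.prod (rho g h)))
                ≤ (∫⁻ p, G p ∂σ') + (mE g h) * ∫⁻ z, w z ∂(rho g h) := hJ
              _ = _ := by rw [hGσ, hwρ, add_assoc]
        _ = costE Pm + ∫⁻ y, ENNReal.ofReal |g y - h y| * w y := by
            rw [← hdiag, ← hpq]; ring
      -- done
    exact ⟨hfst, hsndS, hcost⟩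

lemma lint_shift (F : ℝ → ℝ≥0∞) (a : ℝ) : ∫⁻ x, F (x - a) = ∫⁻ x, F x := by
  simpa [sub_eq_add_neg] using lintegral_add_right_eq_self F (-a)

noncomputable def chain (f : ℝ → ℝ) (s : ℝ) : ℕ → Measure (ℝ × ℝ)
  | 0 => (volume.withDensity fun x => ENNReal.ofReal (f x)).map (fun x => (x, x))
  | (k + 1) => stepC (fun x => f (x - (k : ℝ) * s)) (fun x => f (x - ((k : ℝ) + 1) * s))
      (chain f s k)

lemma chain_main {f : ℝ → ℝ} (hfc : Continuous f) (hf0 : ∀ x, 0 ≤ f x)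
    (hfi : ∫⁻ x, ENNReal.ofReal (f x) = 1) (s : ℝ) (k : ℕ) :
    (chain f s k).map Prod.fst = volume.withDensity (fun x => ENNReal.ofReal (f x)) ∧
    (chain f s k).map Prod.snd
      = volume.withDensity (fun x => ENNReal.ofReal (f (x - (k : ℝ) * s))) ∧
    costE (chain f s k)
      ≤ (k : ℝ≥0∞) * ∫⁻ u, ENNReal.ofReal |f u - f (u - s)| * ENNReal.ofReal (Real.sqrt |u|) := by
  induction k with
  | zero =>
    have mdup : Measurable (fun x : ℝ => (x, x)) := measurable_id.prodMk measurable_id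
    have mcost : Measurable fun q : ℝ × ℝ => ENNReal.ofReal (Real.sqrt |q.2 - q.1|) :=
      (Real.continuous_sqrt.comp (continuous_snd.sub continuous_fst).abs).measurable.ennreal_ofReal
    refine ⟨?_, ?_, ?_⟩
    · rw [chain, Measure.map_map measurable_fst mdup]
      have : (Prod.fst ∘ fun x : ℝ => (x, x)) = id := rfl
      rw [this, Measure.map_id]
    · rw [chain, Measure.map_map measurable_snd mdup]
      have : (Prod.snd ∘ fun x : ℝ => (x, x)) = id := rfl
      rw [this, Measure.map_id]
      simp
    · rw [chain, costE, lintegral_map mcost mdup]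
      simp
  | succ k ih =>
    obtain ⟨ihfst, ihsnd, ihcost⟩ := ih
    have hgc : Continuous fun x => f (x - (k : ℝ) * s) :=
      hfc.comp (continuous_id.sub continuous_const)
    have hhc : Continuous fun x => f (x - ((k : ℝ) + 1) * s) :=
      hfc.comp (continuous_id.sub continuous_const)
    have hgi : ∫⁻ x, ENNReal.ofReal (f (x - (k : ℝ) * s)) = 1 := by
      rw [lint_shift (fun x => ENNReal.ofReal (f x)) ((k : ℝ) * s)]; exact hfi
    have hhi : ∫⁻ x, ENNReal.ofReal (f (x - ((k : ℝ) + 1) * s)) = 1 := by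
      rw [lint_shift (fun x => ENNReal.ofReal (f x)) (((k : ℝ) + 1) * s)]; exact hfi
    obtain ⟨sfst, ssnd, scost⟩ := step_main hgc hhc (fun x => hf0 _) (fun x => hf0 _)
      hgi hhi ihsnd ((k : ℝ) * s)
    refine ⟨?_, ?_, ?_⟩
    · rw [chain, sfst, ihfst]
    · rw [chain, ssnd]
      congr 1
      funext x
      congr 2
      push_cast
      ring
    · rw [chain]
      refine le_trans scost ?_
      have hext : (fun y => ENNReal.ofReal |f (y - (k : ℝ) * s) - f (y - ((k : ℝ) + 1) * s)|
            * ENNReal.ofReal (Real.sqrt |y - (k : ℝ) * s|))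
          = fun y => (fun u => ENNReal.ofReal |f u - f (u - s)|
            * ENNReal.ofReal (Real.sqrt |u|)) (y - (k : ℝ) * s) := by
        funext y
        have : y - ((k : ℝ) + 1) * s = (y - (k : ℝ) * s) - s := by ring
        rw [this]
      calc costE (chain f s k) + ∫⁻ y, ENNReal.ofReal
              |f (y - (k : ℝ) * s) - f (y - ((k : ℝ) + 1) * s)|
              * ENNReal.ofReal (Real.sqrt |y - (k : ℝ) * s|)
          = costE (chain f s k) + ∫⁻ u, ENNReal.ofReal |f u - f (u - s)|
              * ENNReal.ofReal (Real.sqrt |u|) := by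
            rw [hext]
            congr 1
            exact lint_shift (fun u => ENNReal.ofReal |f u - f (u - s)| * ENNReal.ofReal (Real.sqrt |u|)) ((k : ℝ) * s)
        _ ≤ ((k : ℝ≥0∞) + 1) * ∫⁻ u, ENNReal.ofReal |f u - f (u - s)|
              * ENNReal.ofReal (Real.sqrt |u|) := by
            rw [add_mul, one_mul]
            exact add_le_add_left ihcost _
        _ = ((k + 1 : ℕ) : ℝ≥0∞) * _ := by push_cast; ring

lemma mem_uIoc_shift (s u v : ℝ) :
    v ∈ Set.uIoc (u - s) u ↔ u ∈ Set.Ico (min v (v + s)) (max v (v + s)) := by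
  rcases le_total 0 s with hs | hs
  · rw [Set.uIoc_of_le (by linarith : u - s ≤ u)]
    rw [min_eq_left (by linarith : v ≤ v + s), max_eq_right (by linarith : v ≤ v + s)]
    simp only [Set.mem_Ioc, Set.mem_Ico]
    constructor <;> rintro ⟨h1, h2⟩ <;> exact ⟨by linarith, by linarith⟩
  · rw [Set.uIoc_comm, Set.uIoc_of_le (by linarith : u ≤ u - s)]
    rw [min_eq_right (by linarith : v + s ≤ v), max_eq_left (by linarith : v + s ≤ v)]
    simp only [Set.mem_Ioc, Set.mem_Ico]
    constructor <;> rintro ⟨h1, h2⟩ <;> exact ⟨by linarith, by linarith⟩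

lemma E_bound {f : ℝ → ℝ} (hfd : Differentiable ℝ f) (hfd' : Continuous (deriv f))
    (hint : Integrable (deriv f)) (s : ℝ) :
    (∫⁻ u, ENNReal.ofReal |f u - f (u - s)| * ENNReal.ofReal (Real.sqrt |u|))
      ≤ ENNReal.ofReal |s| *
        ((∫⁻ v, ENNReal.ofReal (|deriv f v| * Real.sqrt |v|)) +
          ENNReal.ofReal (Real.sqrt |s|) * ∫⁻ v, ENNReal.ofReal |deriv f v|) := by
  classical
  set S : Set (ℝ × ℝ) :=
    {p : ℝ × ℝ | min (p.1 - s) p.1 < p.2} ∩ {p : ℝ × ℝ | p.2 ≤ max (p.1 - s) p.1} with hSdef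
  have hS : MeasurableSet S :=
    (measurableSet_lt ((measurable_fst.sub measurable_const).min measurable_fst)
        measurable_snd).inter
      (measurableSet_le measurable_snd
        ((measurable_fst.sub measurable_const).max measurable_fst))
  have hmemS : ∀ u v : ℝ, (u, v) ∈ S ↔ v ∈ Set.uIoc (u - s) u := by
    intro u v
    rw [hSdef]
    constructor
    · rintro ⟨h1, h2⟩; exact Set.mem_Ioc.2 ⟨h1, h2⟩
    · intro hx; exact ⟨(Set.mem_Ioc.1 hx).1, (Set.mem_Ioc.1 hx).2⟩
  have mf' : Measurable (deriv f) := hfd'.measurable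
  set Φ : ℝ × ℝ → ℝ≥0∞ := fun p =>
    S.indicator (fun _ => (1 : ℝ≥0∞)) p *
      (ENNReal.ofReal |deriv f p.2| * ENNReal.ofReal (Real.sqrt |p.1|)) with hΦdef
  have mΦ : Measurable Φ :=
    ((measurable_const.indicator hS)).mul
      ((mf'.comp measurable_snd).abs.ennreal_ofReal.mul
        ((Real.continuous_sqrt.comp continuous_fst.abs).measurable.ennreal_ofReal))
  -- step 1 : pointwise FTC bound
  have hFTC : ∀ u : ℝ, |f u - f (u - s)| ≤ ∫ v in Set.uIoc (u - s) u, |deriv f v| := by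
    intro u
    have heq : f u - f (u - s) = ∫ v in (u - s)..u, deriv f v :=
      (intervalIntegral.integral_deriv_eq_sub
        (fun x _ => hfd x) (hfd'.intervalIntegrable _ _)).symm
    rw [heq]
    simpa [Real.norm_eq_abs] using
      intervalIntegral.norm_integral_le_integral_norm_uIoc
        (f := deriv f) (a := u - s) (b := u) (μ := volume)
  have hstep1 : ∀ u : ℝ,
      ENNReal.ofReal |f u - f (u - s)| * ENNReal.ofReal (Real.sqrt |u|)
        ≤ ∫⁻ v, Φ (u, v) := by
    intro u
    have h2 : ENNReal.ofReal |f u - f (u - s)|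
        ≤ ∫⁻ v in Set.uIoc (u - s) u, ENNReal.ofReal |deriv f v| := by
      calc ENNReal.ofReal |f u - f (u - s)|
          ≤ ENNReal.ofReal (∫ v in Set.uIoc (u - s) u, |deriv f v|) :=
            ENNReal.ofReal_le_ofReal (hFTC u)
        _ = ∫⁻ v in Set.uIoc (u - s) u, ENNReal.ofReal |deriv f v| :=
            ofReal_integral_eq_lintegral_ofReal (hint.abs.integrableOn)
              (Filter.Eventually.of_forall fun v => abs_nonneg _)
    have h3 : ∫⁻ v, Φ (u, v)
        = (∫⁻ v in Set.uIoc (u - s) u, ENNReal.ofReal |deriv f v|)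
          * ENNReal.ofReal (Real.sqrt |u|) := by
      have hpt : ∀ v, Φ (u, v)
          = (Set.uIoc (u - s) u).indicator (fun v => ENNReal.ofReal |deriv f v|) v
            * ENNReal.ofReal (Real.sqrt |u|) := by
        intro v
        by_cases hv : v ∈ Set.uIoc (u - s) u
        · have hmem : (u, v) ∈ S := (hmemS u v).2 hv
          rw [hΦdef]
          simp only [Set.indicator_of_mem hmem, Set.indicator_of_mem hv]
          ring
        · have hmem : (u, v) ∉ S := fun hc => hv ((hmemS u v).1 hc)
          rw [hΦdef]
          simp [Set.indicator_of_notMem hmem, Set.indicator_of_notMem hv]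
      rw [lintegral_congr hpt,
        lintegral_mul_const' _ _ ENNReal.ofReal_ne_top,
        lintegral_indicator measurableSet_uIoc]
    rw [h3]
    exact mul_le_mul_of_nonneg_right h2 zero_le
  -- swap
  have hswap : ∫⁻ u, ∫⁻ v, Φ (u, v) = ∫⁻ v, ∫⁻ u, Φ (u, v) := by
    apply lintegral_lintegral_swap
    exact mΦ.aemeasurable
  -- step 2 : fixed v bound
  have hfinal : ∀ v : ℝ, (∫⁻ u, Φ (u, v))
      ≤ ENNReal.ofReal |deriv f v|
          * (ENNReal.ofReal (Real.sqrt |v|) + ENNReal.ofReal (Real.sqrt |s|))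
          * ENNReal.ofReal |s| := by
    intro v
    set c : ℝ≥0∞ := ENNReal.ofReal |deriv f v|
      * (ENNReal.ofReal (Real.sqrt |v|) + ENNReal.ofReal (Real.sqrt |s|)) with hc
    set U : Set ℝ := Set.Ico (min v (v + s)) (max v (v + s)) with hU
    have hUmeas : MeasurableSet U := measurableSet_Ico
    have hvol : volume U = ENNReal.ofReal |s| := by
      rw [hU, Real.volume_Ico]
      congr 1
      rcases le_total 0 s with hs | hs
      · rw [min_eq_left (by linarith), max_eq_right (by linarith), abs_of_nonneg hs]; ring
      · rw [min_eq_right (by linarith), max_eq_left (by linarith), abs_of_nonpos hs]; ring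
    have hpt : ∀ u, Φ (u, v) ≤ U.indicator (fun _ => c) u := by
      intro u
      by_cases hu : u ∈ U
      · rw [Set.indicator_of_mem hu]
        have husq : Real.sqrt |u| ≤ Real.sqrt |v| + Real.sqrt |s| := by
          have h1 : min v (v + s) ≤ u := hu.1
          have h2 : u < max v (v + s) := hu.2
          have hminb : v - |s| ≤ min v (v + s) :=
            le_min (by linarith [abs_nonneg s]) (by linarith [neg_abs_le s])
          have hmaxb : max v (v + s) ≤ v + |s| :=
            max_le (by linarith [abs_nonneg s]) (by linarith [le_abs_self s])
          have habs : |u - v| ≤ |s| := abs_le.2 ⟨by linarith, by linarith⟩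
          have habs2 : |u| ≤ |v| + |u - v| := by
            calc |u| = |v + (u - v)| := by ring_nf
            _ ≤ |v| + |u - v| := abs_add_le v (u - v)
          calc Real.sqrt |u| ≤ Real.sqrt (|v| + |u - v|) := Real.sqrt_le_sqrt habs2
            _ ≤ Real.sqrt |v| + Real.sqrt |u - v| := sqrt_add_le' (abs_nonneg _) (abs_nonneg _)
            _ ≤ Real.sqrt |v| + Real.sqrt |s| :=
                add_le_add_right (Real.sqrt_le_sqrt habs) _
        have hΦle : Φ (u, v)
            ≤ ENNReal.ofReal |deriv f v| * ENNReal.ofReal (Real.sqrt |u|) := by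
          rw [hΦdef]
          by_cases hmem : (u, v) ∈ S
          · simp [Set.indicator_of_mem hmem]
          · simp [Set.indicator_of_notMem hmem]
        refine le_trans hΦle ?_
        rw [hc]
        refine mul_le_mul_of_nonneg_left ?_ zero_le
        calc ENNReal.ofReal (Real.sqrt |u|)
            ≤ ENNReal.ofReal (Real.sqrt |v| + Real.sqrt |s|) := ENNReal.ofReal_le_ofReal husq
          _ = ENNReal.ofReal (Real.sqrt |v|) + ENNReal.ofReal (Real.sqrt |s|) :=
              ENNReal.ofReal_add (Real.sqrt_nonneg _) (Real.sqrt_nonneg _)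
      · rw [Set.indicator_of_notMem hu]
        have hnot : (u, v) ∉ S := fun hmem =>
          hu ((mem_uIoc_shift s u v).1 ((hmemS u v).1 hmem))
        rw [hΦdef]
        simp [Set.indicator_of_notMem hnot]
    calc (∫⁻ u, Φ (u, v)) ≤ ∫⁻ u, U.indicator (fun _ => c) u := lintegral_mono hpt
      _ = c * volume U := lintegral_indicator_const hUmeas c
      _ = c * ENNReal.ofReal |s| := by rw [hvol]
  -- final assembly
  have mc : Measurable fun v : ℝ => ENNReal.ofReal |deriv f v|
      * (ENNReal.ofReal (Real.sqrt |v|) + ENNReal.ofReal (Real.sqrt |s|)) :=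
    (mf'.abs.ennreal_ofReal).mul
      (((Real.continuous_sqrt.comp continuous_abs).measurable.ennreal_ofReal).add
        measurable_const)
  calc (∫⁻ u, ENNReal.ofReal |f u - f (u - s)| * ENNReal.ofReal (Real.sqrt |u|))
      ≤ ∫⁻ u, ∫⁻ v, Φ (u, v) := lintegral_mono hstep1
    _ = ∫⁻ v, ∫⁻ u, Φ (u, v) := hswap
    _ ≤ ∫⁻ v, (ENNReal.ofReal |deriv f v|
          * (ENNReal.ofReal (Real.sqrt |v|) + ENNReal.ofReal (Real.sqrt |s|)))
          * ENNReal.ofReal |s| := lintegral_mono hfinal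
    _ = (∫⁻ v, ENNReal.ofReal |deriv f v|
          * (ENNReal.ofReal (Real.sqrt |v|) + ENNReal.ofReal (Real.sqrt |s|)))
          * ENNReal.ofReal |s| := lintegral_mul_const _ mc
    _ = ((∫⁻ v, ENNReal.ofReal |deriv f v| * ENNReal.ofReal (Real.sqrt |v|))
          + (∫⁻ v, ENNReal.ofReal |deriv f v|) * ENNReal.ofReal (Real.sqrt |s|))
          * ENNReal.ofReal |s| := by
        congr 1
        have hsplit : (∫⁻ v, ENNReal.ofReal |deriv f v|
              * (ENNReal.ofReal (Real.sqrt |v|) + ENNReal.ofReal (Real.sqrt |s|)))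
            = ∫⁻ v, (ENNReal.ofReal |deriv f v| * ENNReal.ofReal (Real.sqrt |v|)
              + ENNReal.ofReal |deriv f v| * ENNReal.ofReal (Real.sqrt |s|)) :=
          lintegral_congr fun v => mul_add _ _ _
        rw [hsplit, lintegral_add_left ((mf'.abs.ennreal_ofReal).fun_mul
            (measurable_abs.sqrt.ennreal_ofReal)),
          lintegral_mul_const _ (mf'.abs.ennreal_ofReal)]
    _ = ENNReal.ofReal |s| *
        ((∫⁻ v, ENNReal.ofReal (|deriv f v| * Real.sqrt |v|)) +
          ENNReal.ofReal (Real.sqrt |s|) * ∫⁻ v, ENNReal.ofReal |deriv f v|) := by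
        have : (∫⁻ v, ENNReal.ofReal |deriv f v| * ENNReal.ofReal (Real.sqrt |v|))
            = ∫⁻ v, ENNReal.ofReal (|deriv f v| * Real.sqrt |v|) := by
          apply lintegral_congr; intro v
          rw [ENNReal.ofReal_mul (abs_nonneg _)]
        rw [this]; ring

lemma withDensity_map_add (f : ℝ → ℝ) (hf : Continuous f) (t : ℝ) :
    (volume.withDensity fun x => ENNReal.ofReal (f x)).map (fun x => x + t)
      = volume.withDensity (fun x => ENNReal.ofReal (f (x - t))) := by
  have hmf : Measurable fun x : ℝ => ENNReal.ofReal (f x) := hf.measurable.ennreal_ofReal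
  have hmf' : Measurable fun x : ℝ => ENNReal.ofReal (f (x - t)) :=
    (hf.comp (continuous_id.sub continuous_const)).measurable.ennreal_ofReal
  ext A hA
  rw [Measure.map_apply (measurable_add_const t) hA, withDensity_apply _ hA,
    withDensity_apply _ (hA.preimage (measurable_add_const t)),
    ← lintegral_indicator (hA.preimage (measurable_add_const t)),
    ← lintegral_indicator hA]
  have hpt : ∀ x : ℝ, ((fun x => x + t) ⁻¹' A).indicator (fun x => ENNReal.ofReal (f x)) x
      = (A.indicator (fun y => ENNReal.ofReal (f (y - t)))) (x + t) := by
    intro x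
    by_cases hx : x + t ∈ A
    · rw [Set.indicator_of_mem hx, Set.indicator_of_mem (by exact hx)]
      simp
    · rw [Set.indicator_of_notMem hx, Set.indicator_of_notMem (by exact hx)]
  rw [lintegral_congr hpt,
    lintegral_add_right_eq_self (A.indicator (fun y => ENNReal.ofReal (f (y - t)))) t]

end Stmt12Aux

open MeasureTheory ENNReal Stmt12Aux

/-- The measure on ℝ with density `f` with respect to Lebesgue measure. -/
noncomputable def measOfDensity (f : ℝ → ℝ) : Measure ℝ :=
  volume.withDensity fun x => ENNReal.ofReal (f x)

/-- Lemma 5.2 (`lem:sqrt`): the optimal transport cost, for the cost `√|y - x|`, between a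
probability measure `η` with rapidly decreasing smooth density `f` and its translate by `t`
is at most `|t| ∫ |f'(x)| √|x| dx`. -/
theorem stmt_12 (f : SchwartzMap ℝ ℝ) (hf0 : ∀ x, 0 ≤ f x) (hf1 : ∫ x, f x = 1) (t : ℝ) :
    sInf {c : ℝ | ∃ π : Measure (ℝ × ℝ), IsProbabilityMeasure π ∧
        π.map Prod.fst = measOfDensity f ∧
        π.map Prod.snd = (measOfDensity f).map (fun x => x + t) ∧
        c = ∫ q, Real.sqrt |q.2 - q.1| ∂π}
      ≤ |t| * ∫ x, |deriv f x| * Real.sqrt |x| := by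
  classical
  have hfc : Continuous (⇑f) := f.continuous
  have hfd : Differentiable ℝ (⇑f) := f.differentiable
  have hderiv_eq : deriv (⇑f) = ⇑(SchwartzMap.derivCLM ℝ ℝ f) := by
    funext x; rw [SchwartzMap.derivCLM_apply]
  have hfd' : Continuous (deriv (⇑f)) := by
    rw [hderiv_eq]; exact (SchwartzMap.derivCLM ℝ ℝ f).continuous
  have hint : Integrable (deriv (⇑f)) := by
    rw [hderiv_eq]; exact (SchwartzMap.derivCLM ℝ ℝ f).integrable
  have hfi : ∫⁻ x, ENNReal.ofReal (f x) = 1 := by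
    rw [← ofReal_integral_eq_lintegral_ofReal f.integrable
      (Filter.Eventually.of_forall hf0), hf1, ENNReal.ofReal_one]
  -- integrability of |f'| √|·|
  have hintA : Integrable (fun x => |deriv f x| * Real.sqrt |x|) := by
    have h1 : Integrable (fun x : ℝ => ‖x‖ ^ 1 * ‖(SchwartzMap.derivCLM ℝ ℝ f) x‖) :=
      (SchwartzMap.derivCLM ℝ ℝ f).integrable_pow_mul volume 1
    have h2 : Integrable (fun x : ℝ => ‖(SchwartzMap.derivCLM ℝ ℝ f) x‖
        + ‖x‖ ^ 1 * ‖(SchwartzMap.derivCLM ℝ ℝ f) x‖) :=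
      (SchwartzMap.derivCLM ℝ ℝ f).integrable.norm.add h1
    refine h2.mono ?_ (Filter.Eventually.of_forall fun x => ?_)
    · exact ((hfd'.abs.mul (continuous_abs.sqrt))).aestronglyMeasurable
    · have hd : |deriv f x| = ‖(SchwartzMap.derivCLM ℝ ℝ f) x‖ := by
        rw [hderiv_eq]; simp [Real.norm_eq_abs]
      have hsq : Real.sqrt |x| ≤ 1 + |x| := by
        rcases le_total |x| 1 with hx | hx
        · have h1 : Real.sqrt |x| ≤ 1 := by
            calc Real.sqrt |x| ≤ Real.sqrt 1 := Real.sqrt_le_sqrt hx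
            _ = 1 := Real.sqrt_one
          linarith [abs_nonneg x]
        · have h1 : Real.sqrt |x| ≤ |x| := by
            calc Real.sqrt |x| ≤ Real.sqrt (|x| * |x|) := Real.sqrt_le_sqrt (by nlinarith)
            _ = |x| := Real.sqrt_mul_self (abs_nonneg x)
          linarith
      have hb : |deriv f x| * Real.sqrt |x| ≤ ‖(SchwartzMap.derivCLM ℝ ℝ f) x‖
          + ‖x‖ ^ 1 * ‖(SchwartzMap.derivCLM ℝ ℝ f) x‖ := by
        rw [← hd, pow_one, Real.norm_eq_abs]
        calc |deriv f x| * Real.sqrt |x| ≤ |deriv f x| * (1 + |x|) :=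
              mul_le_mul_of_nonneg_left hsq (abs_nonneg _)
          _ = |deriv f x| + |x| * |deriv f x| := by ring
      rw [Real.norm_eq_abs, abs_of_nonneg (by positivity)]
      refine le_trans hb (le_abs_self _)
  set Ar : ℝ := ∫ x, |deriv f x| * Real.sqrt |x| with hAr
  set Vr : ℝ := ∫ x, |deriv f x| with hVr
  have hAr0 : 0 ≤ Ar := integral_nonneg fun x => by positivity
  have hVr0 : 0 ≤ Vr := integral_nonneg fun x => abs_nonneg _
  have hA' : (∫⁻ v, ENNReal.ofReal (|deriv f v| * Real.sqrt |v|)) = ENNReal.ofReal Ar :=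
    (ofReal_integral_eq_lintegral_ofReal hintA
      (Filter.Eventually.of_forall fun v => by positivity)).symm
  have hV' : (∫⁻ v, ENNReal.ofReal |deriv f v|) = ENNReal.ofReal Vr :=
    (ofReal_integral_eq_lintegral_ofReal hint.abs
      (Filter.Eventually.of_forall fun v => abs_nonneg _)).symm
  haveI hηprob : IsProbabilityMeasure (measOfDensity ⇑f) := by
    constructor
    rw [measOfDensity, withDensity_apply _ MeasurableSet.univ, Measure.restrict_univ, hfi]
  have hbdd : BddBelow {c : ℝ | ∃ π : Measure (ℝ × ℝ), IsProbabilityMeasure π ∧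
      π.map Prod.fst = measOfDensity f ∧
      π.map Prod.snd = (measOfDensity f).map (fun x => x + t) ∧
      c = ∫ q, Real.sqrt |q.2 - q.1| ∂π} := by
    refine ⟨0, ?_⟩
    rintro c ⟨pp, _, _, _, rfl⟩
    exact integral_nonneg fun q => Real.sqrt_nonneg _
  -- the bound for each n
  have hbound : ∀ n : ℕ, sInf {c : ℝ | ∃ π : Measure (ℝ × ℝ), IsProbabilityMeasure π ∧
      π.map Prod.fst = measOfDensity f ∧
      π.map Prod.snd = (measOfDensity f).map (fun x => x + t) ∧
      c = ∫ q, Real.sqrt |q.2 - q.1| ∂π}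
      ≤ |t| * Ar + |t| * Real.sqrt (|t| / (n + 1)) * Vr := by
    intro n
    set N : ℕ := n + 1 with hN
    set s : ℝ := t / N with hs
    have hNpos : (0 : ℝ) < N := by positivity
    obtain ⟨cfst, csnd, ccost⟩ := chain_main hfc hf0 hfi s N
    haveI hprob : IsProbabilityMeasure (chain (⇑f) s N) :=
      isProb_of_map_fst (η := measOfDensity ⇑f) cfst
    have hsnd' : (chain (⇑f) s N).map Prod.snd = (measOfDensity ⇑f).map (fun x => x + t) := by
      rw [csnd, measOfDensity, withDensity_map_add (⇑f) hfc t]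
      congr 1
      funext x
      have : (N : ℝ) * s = t := by
        rw [hs]; field_simp
      rw [this]
    have hmem : (∫ q, Real.sqrt |q.2 - q.1| ∂(chain (⇑f) s N)) ∈
        {c : ℝ | ∃ π : Measure (ℝ × ℝ), IsProbabilityMeasure π ∧
          π.map Prod.fst = measOfDensity f ∧
          π.map Prod.snd = (measOfDensity f).map (fun x => x + t) ∧
          c = ∫ q, Real.sqrt |q.2 - q.1| ∂π} :=
      ⟨chain (⇑f) s N, hprob, cfst, hsnd', rfl⟩
    refine le_trans (csInf_le hbdd hmem) ?_
    -- now bound the cost integral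
    have hceq : (∫ q, Real.sqrt |q.2 - q.1| ∂(chain (⇑f) s N))
        = (costE (chain (⇑f) s N)).toReal := by
      rw [costE]
      exact integral_eq_lintegral_of_nonneg_ae
        (Filter.Eventually.of_forall fun q => Real.sqrt_nonneg _)
        ((continuous_snd.sub continuous_fst).abs.sqrt.aestronglyMeasurable)
    have hEb : costE (chain (⇑f) s N)
        ≤ ENNReal.ofReal ((N : ℝ) * (|s| * (Ar + Real.sqrt |s| * Vr))) := by
      refine le_trans ccost ?_
      have hE := E_bound hfd hfd' hint s
      calc (N : ℝ≥0∞) * ∫⁻ u, ENNReal.ofReal |f u - f (u - s)|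
              * ENNReal.ofReal (Real.sqrt |u|)
          ≤ (N : ℝ≥0∞) * (ENNReal.ofReal |s| *
            ((∫⁻ v, ENNReal.ofReal (|deriv f v| * Real.sqrt |v|)) +
              ENNReal.ofReal (Real.sqrt |s|) * ∫⁻ v, ENNReal.ofReal |deriv f v|)) :=
            mul_le_mul_of_nonneg_left hE zero_le
        _ = ENNReal.ofReal ((N : ℝ) * (|s| * (Ar + Real.sqrt |s| * Vr))) := by
            rw [hA', hV', ← ENNReal.ofReal_mul (Real.sqrt_nonneg _),
              ← ENNReal.ofReal_add hAr0 (by positivity),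
              ← ENNReal.ofReal_mul (abs_nonneg _), ← ENNReal.ofReal_natCast N,
              ← ENNReal.ofReal_mul (by positivity)]
    have htoReal : (costE (chain (⇑f) s N)).toReal
        ≤ (N : ℝ) * (|s| * (Ar + Real.sqrt |s| * Vr)) :=
      ENNReal.toReal_le_of_le_ofReal
        (by
          have : 0 ≤ Ar + Real.sqrt |s| * Vr := by positivity
          positivity) hEb
    rw [hceq]
    have habs : |s| = |t| / N := by
      rw [hs, abs_div, abs_of_pos hNpos]
    have e3 : (N : ℝ) = (n : ℝ) + 1 := by rw [hN]; push_cast; ring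
    have e1 : |s| = |t| / ((n : ℝ) + 1) := by rw [habs, e3]
    have e2 : ((n : ℝ) + 1) * (|t| / ((n : ℝ) + 1)) = |t| := by
      field_simp
    refine htoReal.trans (le_of_eq ?_)
    rw [e1, e3]
    calc ((n : ℝ) + 1) * ((|t| / ((n : ℝ) + 1))
            * (Ar + Real.sqrt (|t| / ((n : ℝ) + 1)) * Vr))
        = (((n : ℝ) + 1) * (|t| / ((n : ℝ) + 1))) * Ar
          + (((n : ℝ) + 1) * (|t| / ((n : ℝ) + 1)))
            * Real.sqrt (|t| / ((n : ℝ) + 1)) * Vr := by ring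
      _ = |t| * Ar + |t| * Real.sqrt (|t| / ((n : ℝ) + 1)) * Vr := by rw [e2]
  -- pass to the limit
  have htend : Filter.Tendsto
      (fun n : ℕ => |t| * Ar + |t| * Real.sqrt (|t| / (n + 1)) * Vr)
      Filter.atTop (nhds (|t| * Ar)) := by
    have h0 : Filter.Tendsto (fun n : ℕ => |t| / ((n : ℝ) + 1)) Filter.atTop (nhds 0) :=
      Filter.Tendsto.div_atTop tendsto_const_nhds
        (Filter.tendsto_atTop_add_const_right _ 1 tendsto_natCast_atTop_atTop)
    have h1 : Filter.Tendsto (fun n : ℕ => Real.sqrt (|t| / ((n : ℝ) + 1)))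
        Filter.atTop (nhds 0) := by
      have := (Real.continuous_sqrt.tendsto 0).comp h0
      simpa only [Function.comp_def, Real.sqrt_zero] using this
    have h2 : Filter.Tendsto (fun n : ℕ => |t| * Real.sqrt (|t| / ((n : ℝ) + 1)) * Vr)
        Filter.atTop (nhds 0) := by
      have := (h1.const_mul |t|).mul_const Vr
      simpa using this
    have := Filter.Tendsto.add (tendsto_const_nhds
      (x := |t| * Ar) (f := Filter.atTop (α := ℕ))) h2
    simpa using this
  exact ge_of_tendsto htend (Filter.Eventually.of_forall hbound)
end

section
/- Let W be a standard one-dimensional Brownian motion started at r₀ with 0 < r₀ ≤ 1, T₀ its hitting time of 0. Then there exist constants a, b > 0, independent of r₀, such that for all y ≥ 1, ℙ(sup_{0≤s≤1} W_s ≥ y | T₀ = 1) ≤ a·exp(−b y²). -/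
open Real

lemma aux_one_add_sq (x : ℝ) : 1 + x^2 ≤ 3 * Real.exp (x^2/4) := by
  have h := Real.add_one_le_exp (x^2/8)
  have h2 : (x^2/8 + 1)^2 ≤ Real.exp (x^2/8)^2 := pow_le_pow_left₀ (by positivity) h 2
  rw [← Real.exp_nat_mul] at h2
  have h3 : Real.exp (↑(2:ℕ) * (x^2/8)) = Real.exp (x^2/4) := by norm_num; ring_nf
  rw [h3] at h2
  nlinarith [sq_nonneg x, sq_nonneg (x^2)]

lemma g_deriv (x : ℝ) : HasDerivAt (fun t : ℝ => t * Real.exp (-(t^2)/2))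
    ((1 - x^2) * Real.exp (-(x^2)/2)) x := by
  have h1 : HasDerivAt (fun t : ℝ => -(t^2)/2) (-x) x := by
    have := (hasDerivAt_pow 2 x).neg.div_const 2
    simpa using this.congr_deriv (by push_cast; ring)
  have h2 : HasDerivAt (fun t : ℝ => Real.exp (-(t^2)/2)) (Real.exp (-(x^2)/2) * (-x)) x :=
    (Real.hasDerivAt_exp _).comp x h1
  have h3 := (hasDerivAt_id x).mul h2
  exact h3.congr_deriv (by simp only [id_eq]; ring)

lemma key_bound {r u : ℝ} (hr : 0 < r) (hr1 : r ≤ 1) (hu : 2 ≤ u) :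
    (u - r) * Real.exp (-((u-r)^2)/2) - (u + r) * Real.exp (-((u+r)^2)/2)
      ≤ 6 * r * Real.exp (-((u-1)^2)/4) := by
  set g : ℝ → ℝ := fun t => t * Real.exp (-(t^2)/2) with hg
  set g' : ℝ → ℝ := fun t => (1 - t^2) * Real.exp (-(t^2)/2) with hg'
  have hC : ∀ x ∈ Set.Icc (u - r) (u + r), ‖g' x‖ ≤ 3 * Real.exp (-((u-1)^2)/4) := by
    intro x hx
    have hx1 : u - 1 ≤ x := le_trans (by linarith) hx.1
    have hu1 : (1:ℝ) ≤ u - 1 := by linarith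
    have hxx : (u-1)^2 ≤ x^2 := by nlinarith
    have h1 : ‖g' x‖ ≤ (1 + x^2) * Real.exp (-(x^2)/2) := by
      rw [hg', Real.norm_eq_abs, abs_mul, abs_of_pos (Real.exp_pos _)]
      gcongr
      rw [abs_le]; constructor <;> nlinarith
    have h2 : (1 + x^2) * Real.exp (-(x^2)/2) ≤ 3 * Real.exp (x^2/4) * Real.exp (-(x^2)/2) := by
      exact mul_le_mul_of_nonneg_right (aux_one_add_sq x) (Real.exp_pos _).le
    have h3 : 3 * Real.exp (x^2/4) * Real.exp (-(x^2)/2) = 3 * Real.exp (-(x^2)/4) := by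
      rw [mul_assoc, ← Real.exp_add]; ring_nf
    have h4 : Real.exp (-(x^2)/4) ≤ Real.exp (-((u-1)^2)/4) := by
      apply Real.exp_le_exp.2; linarith
    calc ‖g' x‖ ≤ (1 + x^2) * Real.exp (-(x^2)/2) := h1
      _ ≤ 3 * Real.exp (-(x^2)/4) := by rw [← h3]; exact h2
      _ ≤ 3 * Real.exp (-((u-1)^2)/4) := by linarith
  have hmvt := Convex.norm_image_sub_le_of_norm_hasDerivWithin_le
    (f := g) (f' := g') (s := Set.Icc (u - r) (u + r))
    (fun x _ => (g_deriv x).hasDerivWithinAt) hC (convex_Icc _ _)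
    (Set.mem_Icc.2 ⟨le_refl _, by linarith⟩)
    (Set.mem_Icc.2 ⟨by linarith, le_refl _⟩)
  have hb : ‖g (u + r) - g (u - r)‖ ≤ 3 * Real.exp (-((u-1)^2)/4) * ‖(u + r) - (u - r)‖ := hmvt
  rw [Real.norm_eq_abs, Real.norm_eq_abs] at hb
  have habs : |(u + r) - (u - r)| = 2 * r := by rw [abs_of_pos (by linarith)]; ring
  rw [habs] at hb
  have h5 : g (u - r) - g (u + r) ≤ |g (u + r) - g (u - r)| := by
    rw [abs_sub_comm]; exact le_abs_self _
  calc (u - r) * Real.exp (-((u-r)^2)/2) - (u + r) * Real.exp (-((u+r)^2)/2)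
      = g (u - r) - g (u + r) := rfl
    _ ≤ |g (u + r) - g (u - r)| := h5
    _ ≤ 3 * Real.exp (-((u-1)^2)/4) * (2 * r) := hb
    _ ≤ 6 * r * Real.exp (-((u-1)^2)/4) := by ring_nf; linarith

lemma geom_summable (c : ℝ) : Summable (fun n : ℕ => c * Real.exp (-(n:ℝ))) := by
  have h : ∀ n : ℕ, c * Real.exp (-(n:ℝ)) = c * (Real.exp (-1))^n := by
    intro n; rw [← Real.exp_nat_mul]; congr 1; ring
  simp_rw [h]
  exact (summable_geometric_of_lt_one (Real.exp_pos _).le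
    (Real.exp_lt_one_iff.2 (by norm_num))).mul_left c

lemma nat_le_exp (m : ℝ) (hm : 0 ≤ m) : m ≤ Real.exp m := by
  have := Real.add_one_le_exp m; linarith

lemma sum_nat (r₀ y : ℝ) (hr : 0 < r₀) (hr1 : r₀ ≤ 1) (hy : 1 ≤ y) :
    Summable (fun n : ℕ => ((r₀ + 2 * ((n:ℤ):ℝ) * y) / r₀) *
      Real.exp (-(((r₀ + 2 * ((n:ℤ):ℝ) * y) ^ 2 - r₀ ^ 2) / 2))) := by
  refine Summable.of_nonneg_of_le (fun n => ?_) (fun n => ?_) (geom_summable ((1+2*y)/r₀))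
  · have : (0:ℝ) ≤ r₀ + 2 * ((n:ℤ):ℝ) * y := by positivity
    positivity
  · set m : ℝ := (n:ℝ) with hmdef
    have hm0 : 0 ≤ m := Nat.cast_nonneg n
    have hmsq : m ≤ m^2 := by
      have h := Nat.le_self_pow (two_ne_zero) n
      calc m ≤ ((n^2 : ℕ) : ℝ) := by rw [hmdef]; exact_mod_cast h
        _ = m^2 := by push_cast; ring
    have hc : ((n:ℤ):ℝ) = m := by push_cast; rfl
    rw [hc]
    have hme : m ≤ Real.exp m := nat_le_exp m hm0
    have hme1 : 1 ≤ Real.exp m := Real.one_le_exp hm0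
    have hA : (r₀ + 2*m*y)/r₀ ≤ ((1+2*y) * Real.exp m)/r₀ := by
      gcongr
      nlinarith
    have hB : Real.exp (-(((r₀+2*m*y)^2-r₀^2)/2)) ≤ Real.exp (-(2*m)) := by
      apply Real.exp_le_exp.2
      nlinarith [sq_nonneg (m*(y-1)), mul_nonneg (mul_nonneg hm0 (le_trans zero_le_one hy)) hr.le]
    have hE : Real.exp m * Real.exp (-(2*m)) = Real.exp (-m) := by
      rw [← Real.exp_add]; congr 1; ring
    calc (r₀ + 2*m*y)/r₀ * Real.exp (-(((r₀+2*m*y)^2-r₀^2)/2))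
        ≤ ((1+2*y) * Real.exp m)/r₀ * Real.exp (-(2*m)) := by
          apply mul_le_mul hA hB (Real.exp_pos _).le
          positivity
      _ = (1+2*y)/r₀ * (Real.exp m * Real.exp (-(2*m))) := by ring
      _ = (1+2*y)/r₀ * Real.exp (-m) := by rw [hE]

lemma sum_neg (r₀ y : ℝ) (hr : 0 < r₀) (hr1 : r₀ ≤ 1) (hy : 1 ≤ y) :
    Summable (fun n : ℕ => ((r₀ + 2 * ((-((n:ℤ)+1)):ℝ) * y) / r₀) *
      Real.exp (-(((r₀ + 2 * ((-((n:ℤ)+1)):ℝ) * y) ^ 2 - r₀ ^ 2) / 2))) := by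
  rw [← summable_abs_iff]
  refine Summable.of_nonneg_of_le (fun n => abs_nonneg _)
    (fun n => ?_) (geom_summable (2*y*Real.exp 1/r₀))
  set m : ℝ := (n:ℝ) with hmdef
  have hm0 : 0 ≤ m := Nat.cast_nonneg n
  have hc : ((-((n:ℤ)+1)):ℝ) = -(m+1) := by push_cast; ring
  rw [hc]
  set u : ℝ := 2*(m+1)*y with hudef
  have hu2 : 2 ≤ u := by nlinarith
  have hrw : r₀ + 2*(-(m+1))*y = r₀ - u := by rw [hudef]; ring
  rw [hrw]
  rw [abs_mul, abs_of_pos (Real.exp_pos _), abs_div, abs_of_pos hr]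
  have habs : |r₀ - u| ≤ u := by rw [abs_le]; constructor <;> nlinarith
  have hme : m + 1 ≤ Real.exp m * Real.exp 1 := by
    rw [← Real.exp_add]; have := Real.add_one_le_exp (m+1); linarith
  have hA : |r₀ - u|/r₀ ≤ (2*y*Real.exp 1/r₀) * Real.exp m := by
    rw [div_mul_eq_mul_div]
    gcongr
    calc |r₀ - u| ≤ u := habs
      _ = 2*y*(m+1) := by rw [hudef]; ring
      _ ≤ 2*y*(Real.exp m * Real.exp 1) := by
          apply mul_le_mul_of_nonneg_left hme (by linarith)
      _ = 2*y*Real.exp 1 * Real.exp m := by ring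
  have hB : Real.exp (-(((r₀-u)^2-r₀^2)/2)) ≤ Real.exp (-(2*m)) := by
    apply Real.exp_le_exp.2
    nlinarith [sq_nonneg m, mul_nonneg hm0 (by linarith : (0:ℝ) ≤ y), sq_nonneg (m*(y-1))]
  have hE : Real.exp m * Real.exp (-(2*m)) = Real.exp (-m) := by
    rw [← Real.exp_add]; congr 1; ring
  calc |r₀ - u|/r₀ * Real.exp (-(((r₀-u)^2-r₀^2)/2))
      ≤ ((2*y*Real.exp 1/r₀) * Real.exp m) * Real.exp (-(2*m)) := by
        apply mul_le_mul hA hB (Real.exp_pos _).le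
        positivity
    _ = (2*y*Real.exp 1/r₀) * (Real.exp m * Real.exp (-(2*m))) := by ring
    _ = 2*y*Real.exp 1/r₀ * Real.exp (-m) := by rw [hE]

lemma pair_identity (r₀ y : ℝ) (hr : 0 < r₀) (n : ℕ)
    (f : ℤ → ℝ)
    (hf : f = fun k : ℤ => ((r₀ + 2 * (k:ℝ) * y) / r₀) *
            Real.exp (-(((r₀ + 2 * (k:ℝ) * y) ^ 2 - r₀ ^ 2) / 2)))
    (u : ℝ) (hu : u = 2 * ((n:ℝ) + 1) * y) :
    -(f ((n:ℤ)+1) + f (-((n:ℤ)+1))) = (Real.exp (r₀^2/2) / r₀) *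
      ((u - r₀) * Real.exp (-((u-r₀)^2)/2) - (u + r₀) * Real.exp (-((u+r₀)^2)/2)) := by
  subst hf hu
  have e1 : Real.exp (-(((r₀ + 2*((n:ℝ)+1)*y) ^ 2 - r₀ ^ 2) / 2))
      = Real.exp (r₀^2/2) * Real.exp (-((2*((n:ℝ)+1)*y+r₀)^2)/2) := by
    rw [← Real.exp_add]; congr 1; ring
  have e2 : Real.exp (-(((r₀ + 2*(-((n:ℝ)+1))*y) ^ 2 - r₀ ^ 2) / 2))
      = Real.exp (r₀^2/2) * Real.exp (-((2*((n:ℝ)+1)*y-r₀)^2)/2) := by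
    rw [← Real.exp_add]; congr 1; ring
  simp only []
  push_cast
  rw [e1, e2]
  field_simp
  ring


set_option maxHeartbeats 1000000 in

/-- Gaussian tail bound for the conditioned maximum of Brownian motion before hitting `0`.
The conditional probability `ℙ(sup_{0≤s≤1} W_s ≥ y | T₀ = 1)` for a Brownian motion started
at `r₀` is expressed through the explicit series
`1 - ∑_{k∈ℤ} ((r₀+2ky)/r₀) exp(-((r₀+2ky)² - r₀²)/2)`. -/
theorem stmt_13 :
    ∃ a : ℝ, 0 < a ∧ ∃ b : ℝ, 0 < b ∧
      ∀ r₀ ∈ Set.Ioc (0 : ℝ) 1, ∀ y : ℝ, 1 ≤ y →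
        1 - ∑' k : ℤ, ((r₀ + 2 * k * y) / r₀) *
            Real.exp (-(((r₀ + 2 * k * y) ^ 2 - r₀ ^ 2) / 2))
          ≤ a * Real.exp (-b * y ^ 2) := by
  refine ⟨24, by norm_num, 1/4, by norm_num, ?_⟩
  rintro r₀ ⟨hr, hr1⟩ y hy
  set f : ℤ → ℝ := fun k : ℤ => ((r₀ + 2 * (k:ℝ) * y) / r₀) *
      Real.exp (-(((r₀ + 2 * (k:ℝ) * y) ^ 2 - r₀ ^ 2) / 2)) with hfdef
  -- basic numeric facts
  have hexp1 : (2:ℝ) ≤ Real.exp 1 := by have := Real.add_one_le_exp 1; linarith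
  have hexphalf : Real.exp (r₀^2/2) ≤ 2 := by
    have h1 : Real.exp (r₀^2/2) ≤ Real.exp (1/2) := by
      apply Real.exp_le_exp.2; nlinarith
    have h2 : Real.exp (1/2) * Real.exp (1/2) = Real.exp 1 := by
      rw [← Real.exp_add]; norm_num
    have h3 := Real.exp_one_lt_d9
    nlinarith [Real.exp_pos (1/2)]
  have hexpneg1 : Real.exp (-1) ≤ 1/2 := by
    rw [Real.exp_neg]
    rw [inv_le_comm₀ (Real.exp_pos 1) (by norm_num)]
    linarith
  -- summability
  have hfnat : Summable (fun n : ℕ => f (n:ℤ)) := sum_nat r₀ y hr hr1 hy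
  have hfneg : Summable (fun n : ℕ => f (-((n:ℤ)+1))) :=
    (sum_neg r₀ y hr hr1 hy).congr (fun n => by rw [hfdef]; push_cast; ring_nf)
  have hshift : Summable (fun n : ℕ => f ((n:ℤ)+1)) := by
    have h1 : Summable (fun n : ℕ => f ((n+1 : ℕ) : ℤ)) := (summable_nat_add_iff 1).mpr hfnat
    exact h1.congr (fun n => by push_cast; ring_nf)
  have hpairS : Summable (fun n : ℕ => f ((n:ℤ)+1) + f (-((n:ℤ)+1))) := hshift.add hfneg
  -- value of f 0
  have hf0 : f 0 = 1 := by
    rw [hfdef]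
    norm_num
    exact hr.ne'
  -- decompose the integer tsum
  have hdec : ∑' k : ℤ, f k = f 0 + ∑' n : ℕ, (f ((n:ℤ)+1) + f (-((n:ℤ)+1))) := by
    rw [tsum_of_nat_of_neg_add_one hfnat hfneg, hfnat.tsum_eq_zero_add]
    have hcong : ∑' n : ℕ, f ((n+1 : ℕ) : ℤ) = ∑' n : ℕ, f ((n:ℤ)+1) :=
      tsum_congr (fun n => by norm_num)
    rw [hcong, add_assoc, ← Summable.tsum_add hshift hfneg]
    norm_num
  -- termwise bound
  have hterm : ∀ n : ℕ, -(f ((n:ℤ)+1) + f (-((n:ℤ)+1)))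
      ≤ (12 * Real.exp (-(y^2)/4)) * Real.exp (-(n:ℝ)) := by
    intro n
    set m : ℝ := (n:ℝ) with hmdef
    have hm0 : 0 ≤ m := Nat.cast_nonneg n
    set u : ℝ := 2*(m+1)*y with hudef
    have hu2 : 2 ≤ u := by nlinarith
    rw [pair_identity r₀ y hr n f hfdef u (by rw [hudef])]
    have hkey := key_bound hr hr1 hu2
    have hDle : (Real.exp (r₀^2/2) / r₀) *
        ((u - r₀) * Real.exp (-((u-r₀)^2)/2) - (u + r₀) * Real.exp (-((u+r₀)^2)/2))
        ≤ (Real.exp (r₀^2/2) / r₀) * (6 * r₀ * Real.exp (-((u-1)^2)/4)) := by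
      apply mul_le_mul_of_nonneg_left hkey (by positivity)
    have heq : (Real.exp (r₀^2/2) / r₀) * (6 * r₀ * Real.exp (-((u-1)^2)/4))
        = 6 * Real.exp (r₀^2/2) * Real.exp (-((u-1)^2)/4) := by
      field_simp
    have hexpu : Real.exp (-((u-1)^2)/4) ≤ Real.exp (-(y^2)/4) * Real.exp (-m) := by
      rw [← Real.exp_add]
      apply Real.exp_le_exp.2
      have hyu : (2*m+1)*y ≤ u - 1 := by rw [hudef]; nlinarith
      have h1 : 0 ≤ (2*m+1)*y := by positivity
      have h2 : ((2*m+1)*y)^2 ≤ (u-1)^2 := pow_le_pow_left₀ h1 hyu 2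
      have h4 : y^2 + 4*m ≤ ((2*m+1)*y)^2 := by
        nlinarith [mul_nonneg hm0 (by nlinarith : (0:ℝ) ≤ y^2-1), sq_nonneg (m*y)]
      linarith
    calc (Real.exp (r₀^2/2) / r₀) *
        ((u - r₀) * Real.exp (-((u-r₀)^2)/2) - (u + r₀) * Real.exp (-((u+r₀)^2)/2))
        ≤ 6 * Real.exp (r₀^2/2) * Real.exp (-((u-1)^2)/4) := by rw [← heq]; exact hDle
      _ ≤ 6 * 2 * (Real.exp (-(y^2)/4) * Real.exp (-m)) := by
          apply mul_le_mul (by nlinarith [Real.exp_pos (r₀^2/2)]) hexpu (Real.exp_pos _).le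
          norm_num
      _ = (12 * Real.exp (-(y^2)/4)) * Real.exp (-m) := by ring
  -- sum the bound
  have hsumbound : Summable (fun n : ℕ => (12 * Real.exp (-(y^2)/4)) * Real.exp (-(n:ℝ))) :=
    geom_summable _
  have hsumneg : Summable (fun n : ℕ => -(f ((n:ℤ)+1) + f (-((n:ℤ)+1)))) := hpairS.neg
  have htsum_le := Summable.tsum_le_tsum hterm hsumneg hsumbound
  have htsum_geom : ∑' n : ℕ, (12 * Real.exp (-(y^2)/4)) * Real.exp (-(n:ℝ))
      ≤ 24 * Real.exp (-(1/4) * y^2) := by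
    have h : ∀ n : ℕ, (12 * Real.exp (-(y^2)/4)) * Real.exp (-(n:ℝ))
        = (12 * Real.exp (-(y^2)/4)) * (Real.exp (-1))^n := by
      intro n; rw [← Real.exp_nat_mul]; congr 2; ring
    rw [tsum_congr h, tsum_mul_left, tsum_geometric_of_lt_one (Real.exp_pos _).le
      (Real.exp_lt_one_iff.2 (by norm_num))]
    have hinv : (1 - Real.exp (-1))⁻¹ ≤ 2 := by
      rw [inv_le_comm₀ (by linarith) (by norm_num)]
      linarith
    have harg : Real.exp (-(y^2)/4) = Real.exp (-(1/4) * y^2) := by congr 1; ring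
    rw [harg]
    nlinarith [Real.exp_pos (-(1/4) * y^2), Real.exp_pos (-1)]
  rw [hdec, hf0]
  have hfinal : 1 - (1 + ∑' n : ℕ, (f ((n:ℤ)+1) + f (-((n:ℤ)+1))))
      = ∑' n : ℕ, -(f ((n:ℤ)+1) + f (-((n:ℤ)+1))) := by
    rw [tsum_neg]; ring
  rw [hfinal]
  exact le_trans htsum_le htsum_geom
end
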